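/- arXiv:0706.1022 — 5 statements merged into one kernel-verified Lean document; each statement's English description precedes it below -/
import Mathlib

section
/- Let ξ be an irrational real number and let n be a positive integer. Then there exists a positive constant c₁ (depending only on ξ and n) such that there are infinitely many algebraic numbers α of degree n over ℚ with the property that every conjugate ᾱ of α satisfies |ξ − ᾱ| ≤ c₁ H(α)^{-2/n}. -/
open Polynomial IntermediateField

/-- The height of an integer polynomial: the largest absolute value of its coefficients. -/
noncomputable def intPolyHeight (P : Polynomial ℤ) : ℝ :=
  ((P.support.sup fun k => (P.coeff k).natAbs : ℕ) : ℝ)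

/-- The `k`-th divided derivative of a real polynomial at `ξ`, i.e. the coefficient of
`(T - ξ)^k` in the Taylor expansion of `P` at `ξ`. -/
noncomputable def divDeriv (ξ : ℝ) (P : Polynomial ℝ) (k : ℕ) : ℝ :=
  (Polynomial.taylor ξ P).coeff k

/-- The `k`-th divided derivative at `ξ` of an integer polynomial, viewed over `ℝ`. -/
noncomputable def divDerivZ (ξ : ℝ) (P : Polynomial ℤ) (k : ℕ) : ℝ :=
  divDeriv ξ (P.map (Int.castRingHom ℝ)) k

/-- The multiset of complex roots of an integer polynomial (the conjugates of `α`, when `P`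
is the irreducible polynomial of `α`). -/
noncomputable def conjRoots (P : Polynomial ℤ) : Multiset ℂ :=
  (P.map (Int.castRingHom ℂ)).roots

/-- `q ≥ 1` is the denominator of a convergent of the continued fraction expansion of `ξ`. -/
def IsConvergentDenom (ξ : ℝ) (q : ℕ) : Prop :=
  1 ≤ q ∧ ∃ i : ℕ, (GenContFract.of ξ).dens i = (q : ℝ)

noncomputable def rt2 (n : ℕ) : ℝ := (2:ℝ) ^ ((n:ℝ)⁻¹)

lemma rt2_pow_real (n : ℕ) (hn : 0 < n) : (rt2 n) ^ n = 2 := by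
  rw [rt2, ← Real.rpow_natCast ((2:ℝ) ^ ((n:ℝ)⁻¹)) n, ← Real.rpow_mul (by norm_num)]
  rw [inv_mul_cancel₀ (by exact_mod_cast hn.ne')]
  norm_num

lemma rt2_pow (n : ℕ) (hn : 0 < n) : ((rt2 n : ℝ) : ℂ) ^ n = 2 := by
  calc ((rt2 n : ℝ) : ℂ) ^ n = (((rt2 n) ^ n : ℝ) : ℂ) := by push_cast; ring
    _ = 2 := by rw [rt2_pow_real n hn]; norm_num

lemma one_lt_rt2 (n : ℕ) (hn : 0 < n) : 1 < rt2 n := by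
  rw [rt2]
  apply Real.one_lt_rpow_iff_of_pos (by norm_num) |>.mpr
  exact Or.inl ⟨by norm_num, by positivity⟩



lemma coeff_linpow (a b : ℤ) (n k : ℕ) :
    ((C a * X + C b) ^ n).coeff k
      = if k ≤ n then a ^ k * b ^ (n - k) * (n.choose k : ℤ) else 0 := by
  rw [add_pow]
  have h1 : ∀ j, (C a * X) ^ j * (C b) ^ (n - j) * ((n.choose j : ℕ) : ℤ[X])
      = C (a ^ j * b ^ (n - j) * (n.choose j : ℤ)) * X ^ j := by
    intro j
    rw [mul_pow, ← C_pow, ← C_pow, ← C_eq_natCast, C_mul, C_mul]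
    ring
  rw [finset_sum_coeff]
  simp only [h1, coeff_C_mul, coeff_X_pow]
  rw [Finset.sum_congr rfl (fun j _ => by rw [mul_ite, mul_one, mul_zero])]
  rw [Finset.sum_ite_eq (Finset.range (n + 1)) k]
  simp [Nat.lt_succ_iff]

lemma natDegree_linpow_le (a b : ℤ) (n : ℕ) :
    ((C a * X + C b) ^ n).natDegree ≤ n := by
  refine (natDegree_pow_le).trans ?_
  have h : (C a * X + C b).natDegree ≤ 1 := by
    refine natDegree_add_le_of_degree_le ?_ ?_
    · exact (natDegree_C_mul_le a X).trans (by simp)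
    · simp [natDegree_C]
  calc n * (C a * X + C b).natDegree ≤ n * 1 := Nat.mul_le_mul_left n h
    _ = n := Nat.mul_one n

lemma sum_linpow (a b p q : ℤ) (n : ℕ) :
    (∑ k ∈ Finset.range (n + 1), ((C a * X + C b) ^ n).coeff k * p ^ k * q ^ (n - k))
      = (a * p + b * q) ^ n := by
  rw [add_pow (a * p) (b * q) n]
  refine Finset.sum_congr rfl fun k hk => ?_
  rw [coeff_linpow, if_pos (Nat.lt_succ_iff.mp (Finset.mem_range.mp hk))]
  rw [mul_pow, mul_pow]
  ring



lemma irred_Xpow_sub_two_int (n : ℕ) (hn : 0 < n) : Irreducible ((X : ℤ[X]) ^ n - C 2) := by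
  have hmonic : ((X : ℤ[X]) ^ n - C 2).Monic := monic_X_pow_sub_C 2 hn.ne'
  have hdeg : ((X : ℤ[X]) ^ n - C 2).natDegree = n := natDegree_X_pow_sub_C
  have hcoeff : ∀ k, k < n → ((X : ℤ[X]) ^ n - C 2).coeff k ∈ Ideal.span {(2:ℤ)} := by
    intro k hk
    rw [coeff_sub, coeff_X_pow, if_neg hk.ne, coeff_C]
    rcases eq_or_ne k 0 with rfl | h
    · simp [Ideal.mem_span_singleton]
    · simp [h]
  refine irreducible_of_eisenstein_criterion ((Ideal.span_singleton_prime (by norm_num))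
    |>.mpr Int.prime_two) ?_ ?_ ?_ ?_ hmonic.isPrimitive
  · rw [hmonic.leadingCoeff]
    simp [Ideal.mem_span_singleton]
  · intro k hk
    refine hcoeff k ?_
    have := (degree_eq_natDegree hmonic.ne_zero) ▸ hk
    exact_mod_cast hdeg ▸ this
  · rw [degree_eq_natDegree (hmonic.ne_zero), hdeg]
    exact_mod_cast hn
  · rw [Ideal.span_singleton_pow, Ideal.mem_span_singleton]
    have h0 : ((X : ℤ[X]) ^ n - C 2).coeff 0 = -2 := by
      rw [coeff_sub, coeff_X_pow, if_neg hn.ne, coeff_C, if_pos rfl]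
      ring
    rw [h0]
    norm_num

lemma irred_Xpow_sub_two (n : ℕ) (hn : 0 < n) : Irreducible ((X : ℚ[X]) ^ n - C 2) := by
  have h := (IsPrimitive.Int.irreducible_iff_irreducible_map_cast
    (monic_X_pow_sub_C (2:ℤ) hn.ne').isPrimitive).mp (irred_Xpow_sub_two_int n hn)
  have he : ((X : ℤ[X]) ^ n - C 2).map (Int.castRingHom ℚ) = (X : ℚ[X]) ^ n - C 2 := by
    simp only [Polynomial.map_sub, Polynomial.map_pow, map_X, map_C]
    norm_num
  rwa [he] at h

lemma minpoly_deg_ge (n : ℕ) (hn : 0 < n) (α : ℂ) (hα : IsIntegral ℚ α)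
    (hw : ((rt2 n : ℝ) : ℂ) ∈ IntermediateField.adjoin ℚ {α}) :
    n ≤ (minpoly ℚ α).natDegree := by
  set w : ℂ := ((rt2 n : ℝ) : ℂ) with hwdef
  have hwint : IsIntegral ℚ w := by
    refine ⟨X ^ n - C 2, monic_X_pow_sub_C 2 hn.ne', ?_⟩
    simp [rt2_pow n hn]
    exact sub_eq_zero.mpr (rt2_pow n hn)
  have hmin : minpoly ℚ w = X ^ n - C 2 := by
    refine (minpoly.eq_of_irreducible_of_monic (B := ℂ) (irred_Xpow_sub_two n hn) ?_
      (monic_X_pow_sub_C 2 hn.ne')).symm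
    simp [rt2_pow n hn]
    exact sub_eq_zero.mpr (rt2_pow n hn)
  have hfw : Module.finrank ℚ ℚ⟮w⟯ = n := by
    rw [IntermediateField.adjoin.finrank hwint, hmin, natDegree_X_pow_sub_C]
  have hle : ℚ⟮w⟯ ≤ ℚ⟮α⟯ := by
    rw [IntermediateField.adjoin_le_iff]
    simpa using hw
  have : FiniteDimensional ℚ ℚ⟮α⟯ := IntermediateField.adjoin.finiteDimensional hα
  have hmono : Module.finrank ℚ ℚ⟮w⟯ ≤ Module.finrank ℚ ℚ⟮α⟯ := by
    refine LinearMap.finrank_le_finrank_of_injective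
      (f := (IntermediateField.inclusion hle).toLinearMap) ?_
    intro x y h
    have := congrArg Subtype.val h
    exact Subtype.ext (by simpa using this)
  rw [IntermediateField.adjoin.finrank hα] at hmono
  omega

lemma choose_le_two_pow' (n k : ℕ) : n.choose k ≤ 2 ^ n := by
  rcases le_or_gt k n with h|h
  · calc n.choose k ≤ ∑ i ∈ Finset.range (n+1), n.choose i :=
        Finset.single_le_sum (fun i _ => Nat.zero_le _) (by simp [Nat.lt_succ_iff, h])
      _ = 2^n := Nat.sum_range_choose n
  · simp [Nat.choose_eq_zero_of_lt h]

set_option maxHeartbeats 1000000 in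
lemma construct (ξ : ℝ) (n : ℕ) (hn : 0 < n) (r : ℚ)
    (hr : |ξ - (r:ℝ)| < 1/(r.den:ℝ)^2) :
    ∃ (P : Polynomial ℤ) (α : ℂ),
      Irreducible P ∧ Irreducible (P.map (Int.castRingHom ℚ)) ∧ P.natDegree = n ∧
      Polynomial.aeval α P = 0 ∧
      ((r.den:ℤ)^n < P.leadingCoeff ∧ P.leadingCoeff ≤ 2*(r.den:ℤ)^n) ∧
      (∑ k ∈ Finset.range (n+1),
          P.coeff k * r.num^k * (r.den:ℤ)^(n-k)).natAbs = 1 ∧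
      ∀ z ∈ conjRoots P, ‖(ξ:ℂ) - z‖ ≤
        ((1 + 1/(rt2 n - 1)) * ((2:ℝ)^(n+2)*(|ξ|+2)^n) ^ (2/(n:ℝ)))
          * intPolyHeight P ^ (-2/(n:ℝ)) := by
  set p : ℤ := r.num with hp_def
  set q : ℤ := (r.den : ℤ) with hq_def
  have hq1 : 1 ≤ q := by rw [hq_def]; exact_mod_cast r.pos
  have hq0 : (0:ℤ) < q := hq1
  -- Bezout
  have hcop : Int.gcd q p = 1 := by
    have h := r.reduced
    rw [Int.gcd]
    simpa [hp_def, hq_def, Nat.coprime_comm] using h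
  obtain ⟨a₀, b₀, hbez⟩ : ∃ a₀ b₀ : ℤ, 1 = q * a₀ + p * b₀ := by
    refine ⟨Int.gcdA q p, Int.gcdB q p, ?_⟩
    have := Int.gcd_eq_gcd_ab q p
    rw [hcop] at this
    exact_mod_cast this
  set m : ℤ := (-b₀) / q with hm_def
  set q' : ℤ := (-b₀) % q with hq'_def
  set p' : ℤ := a₀ - p * m with hp'_def
  have hdm : q * m + q' = -b₀ := Int.mul_ediv_add_emod (-b₀) q
  have hqp' : q * p' - p * q' = 1 := by
    rw [hp'_def]
    linear_combination (-p) * hdm + (-1) * hbez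
  have hq'0 : 0 ≤ q' := Int.emod_nonneg (-b₀) hq0.ne'
  have hq'q : q' < q := Int.emod_lt_of_pos (-b₀) hq0
  -- The polynomial
  set u : Polynomial ℤ := C q * X + C (-p) with hu_def
  set v : Polynomial ℤ := C q' * X + C (-p') with hv_def
  set P : Polynomial ℤ := C 2 * u ^ n - v ^ n with hP_def
  have hPcoeff : ∀ k, P.coeff k = 2 * (u ^ n).coeff k - (v ^ n).coeff k := by
    intro k; rw [hP_def, coeff_sub, coeff_C_mul]
  have hcoeffn : P.coeff n = 2 * q ^ n - q' ^ n := by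
    rw [hPcoeff, hu_def, hv_def, coeff_linpow, coeff_linpow, if_pos le_rfl,
      Nat.sub_self, pow_zero, Nat.choose_self, if_pos le_rfl]
    push_cast; ring
  have hq'n_lt : q' ^ n < q ^ n := pow_lt_pow_left₀ hq'q hq'0 hn.ne'
  have hqn_pos : 0 < q ^ n := pow_pos hq0 n
  have hcoeffn_ne : P.coeff n ≠ 0 := by rw [hcoeffn]; omega
  have hdegle : P.natDegree ≤ n := by
    rw [hP_def]
    refine (natDegree_sub_le _ _).trans ?_
    refine max_le ((natDegree_C_mul_le _ _).trans ?_) ?_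
    · exact natDegree_linpow_le q (-p) n
    · exact natDegree_linpow_le q' (-p') n
  have hdeg : P.natDegree = n := le_antisymm hdegle (le_natDegree_of_ne_zero hcoeffn_ne)
  have hP0 : P ≠ 0 := fun h => hcoeffn_ne (by rw [h, coeff_zero])
  have hlead : P.leadingCoeff = 2 * q ^ n - q' ^ n := by
    rw [leadingCoeff, hdeg, hcoeffn]
  have hleadpos : 0 < P.leadingCoeff := by rw [hlead]; omega
  -- the Φ invariant
  have hPhi : (∑ k ∈ Finset.range (n+1), P.coeff k * p^k * q^(n-k)) = -(-1:ℤ)^n := by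
    have hsplit : (∑ k ∈ Finset.range (n+1), P.coeff k * p^k * q^(n-k))
        = 2 * (∑ k ∈ Finset.range (n+1), (u^n).coeff k * p^k * q^(n-k))
          - (∑ k ∈ Finset.range (n+1), (v^n).coeff k * p^k * q^(n-k)) := by
      rw [Finset.mul_sum, ← Finset.sum_sub_distrib]
      refine Finset.sum_congr rfl fun k _ => ?_
      rw [hPcoeff]; ring
    rw [hsplit, hu_def, hv_def, sum_linpow, sum_linpow]
    have h1 : q * p + (-p) * q = 0 := by ring
    have h2 : q' * p + (-p') * q = -1 := by linear_combination (-1) * hqp'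
    rw [h1, h2, zero_pow hn.ne']
    ring
  have hPhiAbs : (∑ k ∈ Finset.range (n+1), P.coeff k * p^k * q^(n-k)).natAbs = 1 := by
    rw [hPhi, Int.natAbs_neg, Int.natAbs_pow]; simp
  -- primitivity
  have hprim : P.IsPrimitive := by
    intro c hc
    rw [C_dvd_iff_dvd_coeff] at hc
    have hdvd : c ∣ (∑ k ∈ Finset.range (n+1), P.coeff k * p^k * q^(n-k)) :=
      Finset.dvd_sum fun k _ => Dvd.dvd.mul_right (Dvd.dvd.mul_right (hc k) _) _
    rw [hPhi] at hdvd
    exact isUnit_of_dvd_unit hdvd (by simp [Int.isUnit_iff]; rcases Nat.even_or_odd n with h | h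
      <;> simp [h.neg_one_pow])
  -- the algebraic number α
  set w : ℂ := ((rt2 n : ℝ) : ℂ) with hw_def
  have hwpow : w ^ n = 2 := rt2_pow n hn
  have hrt1 : 1 < rt2 n := one_lt_rt2 n hn
  set D : ℂ := (q:ℂ) * w - (q':ℂ) with hD_def
  have hDr_pos : (0:ℝ) < (q:ℝ) * rt2 n - (q':ℝ) := by
    have h1 : (q':ℝ) < (q:ℝ) := by exact_mod_cast hq'q
    have h2 : (1:ℝ) ≤ (q:ℝ) := by exact_mod_cast hq1
    nlinarith
  have hD_eq : D = (((q:ℝ) * rt2 n - (q':ℝ) : ℝ) : ℂ) := by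
    rw [hD_def]; push_cast; ring
  have hD0 : D ≠ 0 := by
    rw [hD_eq]
    exact_mod_cast Complex.ofReal_ne_zero.mpr hDr_pos.ne'
  set α : ℂ := ((p:ℂ) * w - (p':ℂ)) / D with hα_def
  have hcastqp : (q:ℂ) * (p':ℂ) - (p:ℂ) * (q':ℂ) = 1 := by
    have : ((q * p' - p * q' : ℤ) : ℂ) = ((1:ℤ):ℂ) := by rw [hqp']
    push_cast at this
    linear_combination this
  -- key identities
  have hqα : (q:ℂ) * α - (p:ℂ) = -(1 / D) := by
    rw [hα_def]
    field_simp
    linear_combination (-1:ℂ) * hcastqp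
  have hq'α : (q':ℂ) * α - (p':ℂ) = -(w / D) := by
    rw [hα_def]
    field_simp
    linear_combination (-w) * hcastqp
  have haeval : ∀ z : ℂ, Polynomial.aeval z P
      = 2 * ((q:ℂ) * z - (p:ℂ))^n - ((q':ℂ) * z - (p':ℂ))^n := by
    intro z
    rw [hP_def, hu_def, hv_def]
    simp only [map_sub, map_mul, map_pow, map_add, map_neg, aeval_C, aeval_X,
      algebraMap_int_eq, eq_intCast, map_intCast]
    push_cast
    ring
  have hPα : Polynomial.aeval α P = 0 := by
    rw [haeval, hqα, hq'α]
    have h1 : (-(w / D))^n = w^n * (-(1/D))^n := by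
      rw [← mul_pow]; ring_nf
    rw [h1, hwpow]
    ring
  -- irreducibility
  set Pq : Polynomial ℚ := P.map (Int.castRingHom ℚ) with hPq_def
  have hPq0 : Pq ≠ 0 := by
    rw [hPq_def, Ne, Polynomial.map_eq_zero_iff (Int.cast_injective)]
    exact hP0
  have haevalQ : Polynomial.aeval α Pq = 0 := by
    rw [hPq_def, ← algebraMap_int_eq, aeval_map_algebraMap]
    exact hPα
  have hαint : IsIntegral ℚ α := IsAlgebraic.isIntegral ⟨Pq, hPq0, haevalQ⟩
  have hwmem : w ∈ IntermediateField.adjoin ℚ {α} := by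
    have hαmem : α ∈ IntermediateField.adjoin ℚ {α} :=
      IntermediateField.mem_adjoin_simple_self ℚ α
    have h1 : ((q':ℤ):ℂ) * α - ((p':ℤ):ℂ) ∈ IntermediateField.adjoin ℚ {α} :=
      sub_mem (mul_mem (intCast_mem _ q') hαmem) (intCast_mem _ p')
    have h2 : ((q:ℤ):ℂ) * α - ((p:ℤ):ℂ) ∈ IntermediateField.adjoin ℚ {α} :=
      sub_mem (mul_mem (intCast_mem _ q) hαmem) (intCast_mem _ p)
    have hne : (q:ℂ) * α - (p:ℂ) ≠ 0 := by
      rw [hqα]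
      simp [hD0]
    have hweq : w = ((q':ℂ) * α - (p':ℂ)) * ((q:ℂ) * α - (p:ℂ))⁻¹ := by
      rw [hqα, hq'α]
      field_simp
    rw [hweq]
    exact mul_mem h1 (IntermediateField.inv_mem _ h2)
  have hdegminge : n ≤ (minpoly ℚ α).natDegree := minpoly_deg_ge n hn α hαint hwmem
  have hPqdeg : Pq.natDegree = n := by
    rw [hPq_def, natDegree_map_eq_of_injective (Int.cast_injective)]
    exact hdeg
  have hdvd : minpoly ℚ α ∣ Pq := minpoly.dvd ℚ α haevalQ
  obtain ⟨g, hg⟩ := hdvd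
  have hg0 : g ≠ 0 := by
    rintro rfl
    rw [mul_zero] at hg
    exact hPq0 hg
  have hmin0 : minpoly ℚ α ≠ 0 := minpoly.ne_zero hαint
  have hdegsum : (minpoly ℚ α).natDegree + g.natDegree = n := by
    rw [← natDegree_mul hmin0 hg0, ← hg, hPqdeg]
  have hgdeg : g.natDegree = 0 := by omega
  have hgunit : IsUnit g := by
    rw [Polynomial.eq_C_of_natDegree_eq_zero hgdeg]
    refine Polynomial.isUnit_C.mpr (isUnit_iff_ne_zero.mpr ?_)
    intro h
    apply hg0
    rw [Polynomial.eq_C_of_natDegree_eq_zero hgdeg, h, map_zero]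
  have hirrQ : Irreducible Pq := by
    refine Associated.irreducible ⟨hgunit.unit, ?_⟩ (minpoly.irreducible hαint)
    rw [IsUnit.unit_spec]
    exact hg.symm
  have hirr : Irreducible P := (Polynomial.IsPrimitive.Int.irreducible_iff_irreducible_map_cast hprim).mpr hirrQ
  -- real bounds
  set Q : ℝ := (r.den : ℝ) with hQ_def
  have hQ1 : 1 ≤ Q := by rw [hQ_def]; exact_mod_cast r.pos
  have hQ0 : (0:ℝ) < Q := lt_of_lt_of_le zero_lt_one hQ1
  have hqQ : ((q:ℤ):ℝ) = Q := by rw [hq_def, hQ_def]; push_cast; ring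
  have hrval : (r:ℝ) = (p:ℝ) / Q := by rw [Rat.cast_def, hp_def, hQ_def]
  have hrabs : |(r:ℝ)| ≤ |ξ| + 1 := by
    have h1 : |(r:ℝ)| ≤ |ξ| + |ξ - r| := by
      have := abs_sub_abs_le_abs_sub (r:ℝ) ξ
      rw [abs_sub_comm] at this
      linarith
    have h2 : 1/Q^2 ≤ 1 := by
      rw [div_le_one (by positivity)]
      nlinarith
    linarith
  have hpabs : |(p:ℝ)| ≤ (|ξ| + 1) * Q := by
    have : |(p:ℝ)| = |(r:ℝ)| * Q := by
      rw [hrval, abs_div, abs_of_pos hQ0]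
      field_simp
    rw [this]
    exact mul_le_mul_of_nonneg_right hrabs hQ0.le
  have hq'Q : ((q':ℤ):ℝ) ≤ Q := by
    rw [← hqQ]
    exact_mod_cast hq'q.le
  have hq'0R : (0:ℝ) ≤ ((q':ℤ):ℝ) := by exact_mod_cast hq'0
  have hp'abs : |(p':ℝ)| ≤ (|ξ| + 2) * Q := by
    have hqp'R : Q * (p':ℝ) = 1 + (p:ℝ) * (q':ℝ) := by
      rw [← hqQ]
      have : ((q * p' - p * q' : ℤ):ℝ) = ((1:ℤ):ℝ) := by rw [hqp']
      push_cast at this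
      linarith
    have h1 : Q * |(p':ℝ)| ≤ 1 + |(p:ℝ)| * Q := by
      calc Q * |(p':ℝ)| = |Q * (p':ℝ)| := by rw [abs_mul, abs_of_pos hQ0]
        _ = |1 + (p:ℝ) * (q':ℝ)| := by rw [hqp'R]
        _ ≤ 1 + |(p:ℝ) * (q':ℝ)| := by
            refine (abs_add_le _ _).trans ?_
            simp
        _ ≤ 1 + |(p:ℝ)| * Q := by
            rw [abs_mul]
            have : |(q':ℝ)| ≤ Q := by rwa [abs_of_nonneg hq'0R]
            nlinarith [abs_nonneg (p:ℝ)]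
    nlinarith [abs_nonneg (p':ℝ), abs_nonneg (p:ℝ)]
  set B : ℝ := |ξ| + 2 with hB_def
  have hB1 : 1 ≤ B := by have := abs_nonneg ξ; rw [hB_def]; linarith
  have hcb : ∀ k, k ≤ n → |(P.coeff k : ℝ)| ≤ 2^(n+2) * B^n * Q^n := by
    intro k hk
    have hchoose : ((n.choose k : ℕ) : ℝ) ≤ 2^n := by
      exact_mod_cast choose_le_two_pow' n k
    have hchoose0 : (0:ℝ) ≤ ((n.choose k : ℕ) : ℝ) := by positivity
    have hQk : (0:ℝ) ≤ Q^k := by positivity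
    have hucoeff : |((u^n).coeff k : ℝ)| ≤ 2^n * ((|ξ|+1)^(n-k)) * Q^n := by
      rw [hu_def, coeff_linpow, if_pos hk]
      push_cast
      rw [abs_mul, abs_mul, abs_pow, abs_pow, abs_neg, Nat.abs_cast]
      calc |(q:ℝ)|^k * |(p:ℝ)|^(n-k) * ((n.choose k : ℕ):ℝ)
          ≤ Q^k * ((|ξ|+1)*Q)^(n-k) * 2^n := by
            refine mul_le_mul (mul_le_mul ?_ ?_ (by positivity) (by positivity)) hchoose hchoose0 (by positivity)
            · rw [hqQ, abs_of_pos hQ0]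
            · exact pow_le_pow_left₀ (abs_nonneg _) hpabs _
        _ = 2^n * ((|ξ|+1)^(n-k)) * (Q^k * Q^(n-k)) := by rw [mul_pow]; ring
        _ = 2^n * ((|ξ|+1)^(n-k)) * Q^n := by rw [← pow_add, Nat.add_sub_cancel' hk]
    have hvcoeff : |((v^n).coeff k : ℝ)| ≤ 2^n * (B^(n-k)) * Q^n := by
      rw [hv_def, coeff_linpow, if_pos hk]
      push_cast
      rw [abs_mul, abs_mul, abs_pow, abs_pow, abs_neg, Nat.abs_cast]
      calc |(q':ℝ)|^k * |(p':ℝ)|^(n-k) * ((n.choose k : ℕ):ℝ)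
          ≤ Q^k * (B*Q)^(n-k) * 2^n := by
            refine mul_le_mul (mul_le_mul ?_ ?_ (by positivity) (by positivity)) hchoose hchoose0 (by positivity)
            · rw [abs_of_nonneg hq'0R]
              exact pow_le_pow_left₀ hq'0R hq'Q _
            · exact pow_le_pow_left₀ (abs_nonneg _) hp'abs _
        _ = 2^n * (B^(n-k)) * (Q^k * Q^(n-k)) := by rw [mul_pow]; ring
        _ = 2^n * (B^(n-k)) * Q^n := by rw [← pow_add, Nat.add_sub_cancel' hk]
    have hxi1B : (|ξ|+1)^(n-k) ≤ B^n := by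
      calc (|ξ|+1)^(n-k) ≤ B^(n-k) := by
            refine pow_le_pow_left₀ (by positivity) ?_ _
            rw [hB_def]; linarith
        _ ≤ B^n := pow_le_pow_right₀ hB1 (Nat.sub_le n k)
    have hBB : B^(n-k) ≤ B^n := pow_le_pow_right₀ hB1 (Nat.sub_le n k)
    have := hPcoeff k
    calc |(P.coeff k : ℝ)| = |2 * ((u^n).coeff k : ℝ) - ((v^n).coeff k : ℝ)| := by
          rw [this]; push_cast; ring_nf
      _ ≤ 2 * |((u^n).coeff k : ℝ)| + |((v^n).coeff k : ℝ)| := by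
          refine (abs_sub _ _).trans ?_
          rw [abs_mul]
          simp
      _ ≤ 2 * (2^n * ((|ξ|+1)^(n-k)) * Q^n) + 2^n * (B^(n-k)) * Q^n := by
          linarith [hucoeff, hvcoeff]
      _ ≤ 2 * (2^n * B^n * Q^n) + 2^n * B^n * Q^n := by
          gcongr
      _ ≤ 2^(n+2) * B^n * Q^n := by
          have h4 : (2:ℝ)^(n+2) = 4 * 2^n := by ring
          have ht : (0:ℝ) ≤ 2^n * B^n * Q^n := by positivity
          rw [h4]
          nlinarith [ht]
  -- height bounds
  have hsupne : P.support.Nonempty := by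
    rwa [Polynomial.support_nonempty]
  obtain ⟨k₀, hk₀, hsup⟩ := Finset.exists_mem_eq_sup P.support hsupne
    (fun k => (P.coeff k).natAbs)
  have hHeq : intPolyHeight P = |(P.coeff k₀ : ℝ)| := by
    rw [intPolyHeight, hsup, Nat.cast_natAbs, Int.cast_abs]
  have hk₀n : k₀ ≤ n := hdeg ▸ le_natDegree_of_mem_supp k₀ hk₀
  have hH2 : intPolyHeight P ≤ 2^(n+2) * B^n * Q^n := hHeq ▸ hcb k₀ hk₀n
  have hH1 : (1:ℝ) ≤ intPolyHeight P := by
    rw [intPolyHeight]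
    have hnmem : n ∈ P.support := mem_support_iff.mpr hcoeffn_ne
    have h1 : 1 ≤ (P.coeff n).natAbs := Int.natAbs_pos.mpr hcoeffn_ne
    have h2 : (P.coeff n).natAbs ≤ P.support.sup fun k => (P.coeff k).natAbs :=
      Finset.le_sup (f := fun k => (P.coeff k).natAbs) hnmem
    exact_mod_cast le_trans h1 h2
  have hHpos : (0:ℝ) < intPolyHeight P := lt_of_lt_of_le zero_lt_one hH1
  -- root bound
  refine ⟨P, α, hirr, hirrQ, hdeg, hPα, ⟨by rw [hlead]; linarith [hq'n_lt],
    by rw [hlead]; linarith [pow_nonneg hq'0 n]⟩, hPhiAbs, ?_⟩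
  intro z hz
  have hz0 : Polynomial.aeval z P = 0 := by
    have h := (Polynomial.mem_roots'.mp hz).2
    rwa [Polynomial.IsRoot, Polynomial.eval_map, ← algebraMap_int_eq,
      ← Polynomial.aeval_def] at h
  have heq2 : ((q':ℂ) * z - (p':ℂ))^n = 2 * ((q:ℂ) * z - (p:ℂ))^n := by
    have h := (haeval z).symm.trans hz0
    linear_combination -h
  set s : ℝ := ‖(q:ℂ) * z - (p:ℂ)‖ with hs_def
  set t : ℝ := ‖(q':ℂ) * z - (p':ℂ)‖ with ht_def
  have hs0 : 0 ≤ s := norm_nonneg _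
  have habs : t^n = 2 * s^n := by
    rw [ht_def, hs_def, ← norm_pow, ← norm_pow, heq2, norm_mul]
    norm_num
  have hts : t = rt2 n * s := by
    refine (pow_left_inj₀ (norm_nonneg _) (by positivity) hn.ne').mp ?_
    rw [mul_pow, rt2_pow_real n hn, habs]
  have hqabs : ‖((q:ℤ):ℂ)‖ = Q := by
    rw [Complex.norm_intCast, hqQ]
    exact abs_of_pos hQ0
  have hid : (q:ℂ) * ((q':ℂ) * z - (p':ℂ)) = (q':ℂ) * ((q:ℂ) * z - (p:ℂ)) - 1 := by
    linear_combination -hcastqp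
  have hQt : Q * t ≤ (q':ℝ) * s + 1 := by
    calc Q * t = ‖(q:ℂ) * ((q':ℂ) * z - (p':ℂ))‖ := by
          rw [norm_mul, hqabs]
      _ = ‖(q':ℂ) * ((q:ℂ) * z - (p:ℂ)) - 1‖ := by rw [hid]
      _ ≤ ‖(q':ℂ) * ((q:ℂ) * z - (p:ℂ))‖ + 1 := by
          refine (norm_sub_le _ _).trans ?_
          simp
      _ = (q':ℝ) * s + 1 := by
          rw [norm_mul, Complex.norm_intCast, abs_of_nonneg hq'0R]
  have hrt1' : (0:ℝ) < rt2 n - 1 := by linarith [one_lt_rt2 n hn]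
  have hss : s * (Q * (rt2 n - 1)) ≤ 1 := by
    have h1 : Q * (rt2 n * s) ≤ Q * s + 1 := by
      rw [← hts]
      calc Q * t ≤ (q':ℝ) * s + 1 := hQt
        _ ≤ Q * s + 1 := by nlinarith [hq'Q, hs0, hq'0R]
    nlinarith
  have hsle : s ≤ 1 / (Q * (rt2 n - 1)) := by
    rw [le_div_iff₀ (by positivity)]
    exact hss
  have hrz : ‖(r:ℂ) - z‖ = s / Q := by
    have hrc : (r:ℂ) = (p:ℂ) / (q:ℂ) := by
      rw [Rat.cast_def]; rw [hp_def, hq_def]; push_cast; ring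
    have hq0c : ((q:ℤ):ℂ) ≠ 0 := by
      simp only [Ne, Int.cast_eq_zero]
      omega
    have : (r:ℂ) - z = -(((q:ℂ) * z - (p:ℂ)) / (q:ℂ)) := by
      rw [hrc]
      field_simp
      ring
    rw [this, norm_neg, norm_div, hqabs]
  have hξz : ‖(ξ:ℂ) - z‖ ≤ (1 + 1/(rt2 n - 1)) / Q^2 := by
    have h1 : ‖(ξ:ℂ) - z‖ ≤ |ξ - (r:ℝ)| + s / Q := by
      calc ‖(ξ:ℂ) - z‖ ≤ ‖(ξ:ℂ) - (r:ℂ)‖ + ‖(r:ℂ) - z‖ := by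
            have := norm_sub_le_norm_sub_add_norm_sub ((ξ:ℂ)) ((r:ℂ)) z
            exact this
        _ = |ξ - (r:ℝ)| + s / Q := by
            rw [hrz]
            congr 1
            rw [show ((ξ:ℂ) - (r:ℂ)) = (((ξ - (r:ℝ)):ℝ):ℂ) by push_cast; ring,
              Complex.norm_real, Real.norm_eq_abs]
    have h2 : s / Q ≤ (1/(rt2 n - 1)) / Q^2 := by
      rw [div_le_div_iff₀ hQ0 (by positivity)]
      calc s * Q^2 ≤ (1 / (Q * (rt2 n - 1))) * Q^2 :=
            mul_le_mul_of_nonneg_right hsle (by positivity)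
        _ = (1/(rt2 n - 1)) * Q := by
            field_simp
    have h3 : (1 + 1/(rt2 n - 1)) / Q^2 = 1/Q^2 + (1/(rt2 n - 1))/Q^2 := add_div _ _ _
    rw [h3]
    linarith [hr]
  -- rpow assembly
  set c2 : ℝ := 2^(n+2) * B^n with hc2_def
  have hc2pos : (0:ℝ) < c2 := by rw [hc2_def]; positivity
  have hnR : (0:ℝ) < (n:ℝ) := by exact_mod_cast hn
  have hele : -2/(n:ℝ) ≤ 0 := div_nonpos_of_nonpos_of_nonneg (by norm_num) hnR.le
  have hH2' : intPolyHeight P ≤ c2 * Q^n := by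
    rw [hc2_def, mul_assoc]
    calc intPolyHeight P ≤ 2^(n+2) * B^n * Q^n := hH2
      _ = 2^(n+2) * (B^n * Q^n) := by ring
  have hstep1 : (c2 * Q^n) ^ (-2/(n:ℝ)) ≤ intPolyHeight P ^ (-2/(n:ℝ)) :=
    Real.rpow_le_rpow_of_nonpos hHpos hH2' hele
  have hQn_eq : ((Q^n : ℝ)) ^ (-2/(n:ℝ)) = (Q^2)⁻¹ := by
    rw [← Real.rpow_natCast Q n, ← Real.rpow_mul hQ0.le]
    have h4 : (n:ℝ) * (-2/(n:ℝ)) = -2 := by field_simp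
    rw [h4, show ((-2):ℝ) = -((2:ℕ):ℝ) by norm_num, Real.rpow_neg hQ0.le,
      Real.rpow_natCast]
  have hsplit : (c2 * Q^n) ^ (-2/(n:ℝ)) = c2 ^ (-2/(n:ℝ)) * (Q^2)⁻¹ := by
    rw [Real.mul_rpow hc2pos.le (by positivity), hQn_eq]
  have hc2cancel : c2 ^ (2/(n:ℝ)) * c2 ^ (-2/(n:ℝ)) = 1 := by
    rw [← Real.rpow_add hc2pos]
    have h6 : 2/(n:ℝ) + -2/(n:ℝ) = 0 := by ring
    rw [h6, Real.rpow_zero]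
  have hK : (0:ℝ) < 1 + 1/(rt2 n - 1) := by
    have := one_div_pos.mpr hrt1'
    linarith
  calc ‖(ξ:ℂ) - z‖ ≤ (1 + 1/(rt2 n - 1)) / Q^2 := hξz
    _ = (1 + 1/(rt2 n - 1)) * (c2 ^ (2/(n:ℝ)) * (c2 ^ (-2/(n:ℝ)) * (Q^2)⁻¹)) := by
        have h5 : c2 ^ (2/(n:ℝ)) * (c2 ^ (-2/(n:ℝ)) * (Q^2)⁻¹) = (Q^2)⁻¹ := by
          rw [← mul_assoc, hc2cancel, one_mul]
        rw [h5, div_eq_mul_inv]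
    _ = ((1 + 1/(rt2 n - 1)) * c2 ^ (2/(n:ℝ))) * ((c2 * Q^n) ^ (-2/(n:ℝ))) := by
        rw [hsplit]
        ring
    _ ≤ ((1 + 1/(rt2 n - 1)) * c2 ^ (2/(n:ℝ))) * intPolyHeight P ^ (-2/(n:ℝ)) := by
        refine mul_le_mul_of_nonneg_left hstep1 ?_
        exact (mul_pos hK (Real.rpow_pos_of_pos hc2pos _)).le


/-- Theorem A (i): for irrational `ξ` and `n ≥ 1` there is `c₁ > 0` such that infinitely many
algebraic numbers `α` of degree `n` satisfy `|ξ - ᾱ| ≤ c₁ H(α)^(-2/n)` for every conjugate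
`ᾱ` of `α`. Here `α` is encoded by its irreducible polynomial `P ∈ ℤ[T]` of degree `n`. -/
theorem approx_by_all_conjugates_of_algebraic_number
    (ξ : ℝ) (hξ : Irrational ξ) (n : ℕ) (hn : 0 < n) :
    ∃ c₁ : ℝ, 0 < c₁ ∧
      {α : ℂ | ∃ P : Polynomial ℤ, Irreducible P ∧ P.natDegree = n ∧
        Polynomial.aeval α P = 0 ∧
        ∀ z ∈ conjRoots P,
          ‖(ξ : ℂ) - z‖ ≤ c₁ * intPolyHeight P ^ (-2 / (n : ℝ))}.Infinite := by
  have hrt1' : (0:ℝ) < rt2 n - 1 := by linarith [one_lt_rt2 n hn]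
  set T : Set ℚ := {r : ℚ | |ξ - (r:ℝ)| < 1/(r.den:ℝ)^2} with hT_def
  have hTinf : T.Infinite := by
    exact Real.infinite_rat_abs_sub_lt_one_div_den_sq_of_irrational hξ
  have key : ∀ B : ℕ, ∃ r : ℚ, r ∈ T ∧ B < r.den := by
    intro B
    by_contra hcon
    push_neg at hcon
    set M : ℤ := ⌈(|ξ|+1) * (B:ℝ)⌉ with hM_def
    have hsub : T ⊆ (fun r : ℚ => (r.num, (r.den:ℤ))) ⁻¹'
        (Set.Icc (-M, 1) (M, (B:ℤ))) := by
      intro r hr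
      have hden : r.den ≤ B := hcon r hr
      have hQ0 : (0:ℝ) < (r.den:ℝ) := by exact_mod_cast r.pos
      have hrabs : |(r:ℝ)| ≤ |ξ| + 1 := by
        have h1 : |(r:ℝ)| ≤ |ξ| + |ξ - (r:ℝ)| := by
          have := abs_sub_abs_le_abs_sub (r:ℝ) ξ
          rw [abs_sub_comm] at this
          linarith
        have h2 : 1/(r.den:ℝ)^2 ≤ 1 := by
          rw [div_le_one (by positivity)]
          have : (1:ℝ) ≤ (r.den:ℝ) := by exact_mod_cast r.pos
          nlinarith
        have h3 := hr
        rw [hT_def] at h3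
        simp only [Set.mem_setOf_eq] at h3
        linarith
      have hnum : |(r.num:ℝ)| ≤ (|ξ|+1) * (B:ℝ) := by
        have h4 : |(r.num:ℝ)| = |(r:ℝ)| * (r.den:ℝ) := by
          rw [Rat.cast_def, abs_div, abs_of_pos hQ0] at *
          field_simp
        rw [h4]
        have h5 : (r.den:ℝ) ≤ (B:ℝ) := by exact_mod_cast hden
        have h6 : (0:ℝ) ≤ |ξ| + 1 := by positivity
        nlinarith [abs_nonneg (r:ℝ)]
      have hnumM : |r.num| ≤ M := by
        have h7 : ((|r.num| : ℤ):ℝ) ≤ (M:ℝ) := by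
          rw [Int.cast_abs]
          exact hnum.trans (Int.le_ceil _)
        exact_mod_cast h7
      simp only [Set.mem_preimage, Set.mem_Icc, Prod.mk_le_mk]
      refine ⟨⟨?_, ?_⟩, ⟨?_, ?_⟩⟩
      · linarith [neg_abs_le r.num]
      · exact_mod_cast r.pos
      · linarith [le_abs_self r.num]
      · exact_mod_cast hden
    have hfin : ((fun r : ℚ => (r.num, (r.den:ℤ))) ⁻¹'
        (Set.Icc (-M, 1) (M, (B:ℤ)))).Finite := by
      refine Set.Finite.preimage ?_ (Set.finite_Icc _ _)
      intro a _ b _ h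
      have h1 : a.num = b.num := congrArg Prod.fst h
      have h2 : (a.den:ℤ) = (b.den:ℤ) := congrArg Prod.snd h
      exact Rat.ext h1 (by exact_mod_cast h2)
    exact hTinf (hfin.subset hsub)
  choose g hgT hgden using key
  set f : ℕ → ℚ := fun i => Nat.rec (g 0) (fun _ prev => g (2 * prev.den)) i with hf_def
  have hfT : ∀ i, f i ∈ T := by
    intro i
    cases i with
    | zero => exact hgT 0
    | succ k => exact hgT _
  have hfstep : ∀ i, 2 * (f i).den < (f (i+1)).den := fun i => hgden (2 * (f i).den)
  have hfmono : StrictMono (fun i => (f i).den) := by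
    apply strictMono_nat_of_lt_succ
    intro i
    have h := hfstep i
    have := (f i).pos
    omega
  have hflt : ∀ i j, i < j → 2 * (f i).den ≤ (f j).den := by
    intro i j hij
    calc 2 * (f i).den ≤ (f (i+1)).den := (hfstep i).le
      _ ≤ (f j).den := hfmono.le_iff_le.mpr hij
  choose P α hP1 hP2 hP3 hP4 hP5 hP6 hP7 using fun i =>
    construct ξ n hn (f i) (hfT i)
  refine ⟨(1 + 1/(rt2 n - 1)) * ((2:ℝ)^(n+2)*(|ξ|+2)^n) ^ (2/(n:ℝ)), ?_, ?_⟩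
  · have h1 : (0:ℝ) < 1 + 1/(rt2 n - 1) := by
      have := one_div_pos.mpr hrt1'
      linarith
    have h2 : (0:ℝ) < ((2:ℝ)^(n+2)*(|ξ|+2)^n) ^ (2/(n:ℝ)) :=
      Real.rpow_pos_of_pos (by positivity) _
    positivity
  refine Set.infinite_of_injective_forall_mem (f := α) ?_ ?_
  · -- injectivity
    have key2 : ∀ i j, i < j → α i ≠ α j := by
      intro i j hij hαeq
      set Li : ℤ := (P i).leadingCoeff with hLi_def
      set Lj : ℤ := (P j).leadingCoeff with hLj_def
      have hLiLj : Li < Lj := by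
        have h1 : Li ≤ 2 * ((f i).den:ℤ)^n := (hP5 i).2
        have h2 : ((f j).den:ℤ)^n < Lj := (hP5 j).1
        have h3 : (2 * ((f i).den:ℤ))^n ≤ ((f j).den:ℤ)^n := by
          refine pow_le_pow_left₀ (by positivity) ?_ n
          exact_mod_cast hflt i j hij
        have h4 : 2 * ((f i).den:ℤ)^n ≤ (2 * ((f i).den:ℤ))^n := by
          rw [mul_pow]
          have h5 : (2:ℤ) ≤ 2^n := by
            calc (2:ℤ) = 2^1 := (pow_one 2).symm
              _ ≤ 2^n := pow_le_pow_right₀ (by norm_num) hn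
          have h6 : (0:ℤ) ≤ ((f i).den:ℤ)^n := by positivity
          nlinarith
        omega
      have hdeni : (0:ℤ) < ((f i).den:ℤ) := by exact_mod_cast (f i).pos
      have hdenj : (0:ℤ) < ((f j).den:ℤ) := by exact_mod_cast (f j).pos
      have hLipos : (0:ℤ) < Li := lt_trans (pow_pos hdeni n) (hP5 i).1
      have hLjpos : (0:ℤ) < Lj := lt_trans (pow_pos hdenj n) (hP5 j).1
      have hlm : ∀ R : Polynomial ℤ, ((R.map (Int.castRingHom ℚ)).leadingCoeff)
          = ((R.leadingCoeff : ℚ)) := by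
        intro R
        rw [Polynomial.leadingCoeff, Polynomial.leadingCoeff,
          natDegree_map_eq_of_injective Int.cast_injective, coeff_map]
        rfl
      have haevi : Polynomial.aeval (α j) ((P i).map (Int.castRingHom ℚ)) = 0 := by
        rw [← hαeq, ← algebraMap_int_eq, aeval_map_algebraMap]
        exact hP4 i
      have haevj : Polynomial.aeval (α j) ((P j).map (Int.castRingHom ℚ)) = 0 := by
        rw [← algebraMap_int_eq, aeval_map_algebraMap]
        exact hP4 j
      have h1 := minpoly.eq_of_irreducible (hP2 i) haevi
      have h2 := minpoly.eq_of_irreducible (hP2 j) haevj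
      rw [hlm] at h1 h2
      have h3 : (P i).map (Int.castRingHom ℚ) * C ((Li:ℚ))⁻¹
          = (P j).map (Int.castRingHom ℚ) * C ((Lj:ℚ))⁻¹ := by
        rw [← hLi_def] at h1
        rw [← hLj_def] at h2
        exact h1.trans h2.symm
      have hLi0 : ((Li:ℚ)) ≠ 0 := Int.cast_ne_zero.mpr hLipos.ne'
      have hLj0 : ((Lj:ℚ)) ≠ 0 := Int.cast_ne_zero.mpr hLjpos.ne'
      have h4 : (P i).map (Int.castRingHom ℚ) * C ((Lj:ℚ))
          = (P j).map (Int.castRingHom ℚ) * C ((Li:ℚ)) := by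
        have e1 : (P i).map (Int.castRingHom ℚ) * C ((Lj:ℚ))
            = ((P i).map (Int.castRingHom ℚ) * C ((Li:ℚ))⁻¹) * C ((Li:ℚ) * (Lj:ℚ)) := by
          rw [mul_assoc, ← C_mul]
          congr 1
          field_simp
        have e2 : ((P j).map (Int.castRingHom ℚ) * C ((Lj:ℚ))⁻¹) * C ((Li:ℚ) * (Lj:ℚ))
            = (P j).map (Int.castRingHom ℚ) * C ((Li:ℚ)) := by
          rw [mul_assoc, ← C_mul]
          congr 1
          field_simp
        rw [e1, h3, e2]
      have h5 : P i * C Lj = P j * C Li := by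
        apply Polynomial.map_injective (Int.castRingHom ℚ) Int.cast_injective
        rw [Polynomial.map_mul, Polynomial.map_mul, map_C, map_C]
        exact_mod_cast h4
      set Φ : Polynomial ℤ → ℤ := fun R => ∑ k ∈ Finset.range (n+1),
        R.coeff k * (f j).num^k * ((f j).den:ℤ)^(n-k) with hΦ_def
      have hΦmul : ∀ (R : Polynomial ℤ) (c : ℤ), Φ (R * C c) = Φ R * c := by
        intro R c
        rw [hΦ_def]
        simp only [coeff_mul_C, Finset.sum_mul]
        exact Finset.sum_congr rfl fun k _ => by ring
      have h6 : Φ (P i) * Lj = Φ (P j) * Li := by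
        have h := congrArg Φ h5
        rw [hΦmul, hΦmul] at h
        exact h
      have h7 : (Φ (P j)).natAbs = 1 := hP6 j
      have h8 : Lj ∣ Li := by
        rcases Int.natAbs_eq_iff.mp h7 with h | h
        · exact ⟨Φ (P i), by linear_combination -h6 - Li * h⟩
        · exact ⟨-(Φ (P i)), by linear_combination h6 + Li * h⟩
      have h9 := Int.le_of_dvd hLipos h8
      omega
    intro i j hij
    by_contra hne
    rcases lt_trichotomy i j with h | h | h
    · exact key2 i j h hij
    · exact hne h
    · exact key2 j i h hij.symm
  · intro i
    exact ⟨P i, hP1 i, hP3 i, hP4 i, hP7 i⟩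
end

section
/- Let ξ be a real quadratic irrational number (an irrational real number that is algebraic of degree 2 over ℚ) and let n be a positive integer. There exists a constant c > 0 (depending only on ξ and n) with the following property: for every algebraic integer α of degree n+1 over ℚ none of whose conjugates equals ξ, and for every choice of n of the conjugates α₁, …, αₙ of α, one has max_{1 ≤ i ≤ n} |ξ − αᵢ| ≥ c · H(α)^{-2/n}. -/
open Polynomial
open scoped NNReal

lemma liouville2 (ξ : ℝ) (hξ : Irrational ξ) (a b c : ℤ) (ha : a ≠ 0)
    (hroot : (a:ℝ)*ξ^2 + (b:ℝ)*ξ + (c:ℝ) = 0) :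
    ∃ δ : ℝ, 0 < δ ∧ ∀ R S : ℤ, (R:ℝ)*ξ + (S:ℝ) ≠ 0 →
      δ / max 1 |(R:ℝ)| ≤ |(R:ℝ)*ξ + (S:ℝ)| := by
  set f : ℤ[X] := C a * X^2 + C b * X + C c with hf
  have hfd : f.natDegree = 2 := by
    rw [hf]
    compute_degree!
  have hf0 : f ≠ 0 := fun h => by simp [h] at hfd
  have hfe : eval ξ (map (algebraMap ℤ ℝ) f) = 0 := by
    simp [hf]
    linear_combination hroot
  obtain ⟨A, hA, hAle⟩ := Liouville.exists_pos_real_of_irrational_root hξ hf0 hfe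
  refine ⟨min 1 (1/A), by positivity, ?_⟩
  intro R S hRS
  rcases eq_or_ne R 0 with hR | hR
  · subst hR
    have hS : S ≠ 0 := by simpa using hRS
    have h1 : (1:ℝ) ≤ |(S:ℝ)| := by
      rw [← Int.cast_abs]
      exact_mod_cast Int.one_le_abs hS
    simp only [Int.cast_zero, zero_mul, zero_add, abs_zero]
    rw [max_eq_left (zero_le_one)]
    calc min 1 (1/A) / 1 ≤ 1 := by simpa using min_le_left 1 (1/A)
      _ ≤ |(S:ℝ)| := h1
  · have key : ∀ R S : ℤ, 0 < R → min 1 (1/A) / max 1 |(R:ℝ)| ≤ |(R:ℝ)*ξ + (S:ℝ)| := by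
      intro R S hRpos
      have h2 : (R.toNat : ℝ) = (R : ℝ) := by
        exact_mod_cast Int.toNat_of_nonneg hRpos.le
      have h1 : 1 ≤ R.toNat := by omega
      have hb : ((R.toNat - 1 : ℕ) : ℝ) + 1 = (R : ℝ) := by
        push_cast [h1]
        linarith
      have := hAle (-S) (R.toNat - 1)
      rw [hb, hfd] at this
      have hRr : (0:ℝ) < (R:ℝ) := by exact_mod_cast hRpos
      have habs : ξ - ((-S:ℤ):ℝ)/(R:ℝ) = ((R:ℝ)*ξ + S)/R := by
        push_cast
        field_simp
        ring
      rw [habs, abs_div, abs_of_pos hRr] at this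
      have heq : (R:ℝ)^2 * (|(R:ℝ)*ξ + S| / R * A) = (R:ℝ) * (|(R:ℝ)*ξ + S| * A) := by
        field_simp
      rw [heq] at this
      have hmax : max 1 |(R:ℝ)| = (R:ℝ) := by
        rw [abs_of_pos hRr]
        exact max_eq_right (by exact_mod_cast hRpos)
      rw [hmax, div_le_iff₀ hRr]
      have h3 : 1/A ≤ |(R:ℝ)*ξ + S| * (R:ℝ) := by
        rw [div_le_iff₀ hA]
        nlinarith
      calc min 1 (1/A) ≤ 1/A := min_le_right _ _
        _ ≤ |(R:ℝ)*ξ + S| * (R:ℝ) := h3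
    rcases hR.lt_or_gt with hRneg | hRpos
    · have h := key (-R) (-S) (by omega)
      have e1 : ((-R:ℤ):ℝ) * ξ + ((-S:ℤ):ℝ) = -((R:ℝ)*ξ + S) := by push_cast; ring
      have e2 : |((-R:ℤ):ℝ)| = |(R:ℝ)| := by push_cast; rw [abs_neg]
      rw [e1, e2, abs_neg] at h
      exact h
    · exact key R S hRpos


/-- auxiliary sequence expressing `a^k ξ^k` as `r_k ξ + s_k`. -/
def rsAux (a b c : ℤ) : ℕ → ℤ × ℤ
  | 0 => (0, 1)
  | (k+1) => (a * (rsAux a b c k).2 - b * (rsAux a b c k).1, -c * (rsAux a b c k).1)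

lemma rsAux_spec (ξ : ℝ) (a b c : ℤ)
    (hroot : (a:ℝ)*ξ^2 + (b:ℝ)*ξ + (c:ℝ) = 0) (k : ℕ) :
    (a:ℝ)^k * ξ^k = ((rsAux a b c k).1 : ℝ) * ξ + ((rsAux a b c k).2 : ℝ) := by
  induction k with
  | zero => simp [rsAux]
  | succ k ih =>
    have h : (a:ℝ)^(k+1) * ξ^(k+1) = (a:ℝ) * ξ * ((a:ℝ)^k * ξ^k) := by ring
    rw [h, ih]
    show (a:ℝ) * ξ * _ = ((rsAux a b c (k+1)).1 : ℝ) * ξ + ((rsAux a b c (k+1)).2 : ℝ)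
    simp only [rsAux]
    push_cast
    linear_combination ((rsAux a b c k).1 : ℝ) * hroot

lemma rsAux_bound (a b c : ℤ) (k : ℕ) :
    |((rsAux a b c k).1 : ℝ)| ≤ ((|a|+|b|+|c|+1 : ℤ):ℝ)^k ∧
    |((rsAux a b c k).2 : ℝ)| ≤ ((|a|+|b|+|c|+1 : ℤ):ℝ)^k := by
  set K : ℝ := ((|a|+|b|+|c|+1 : ℤ):ℝ) with hK
  have hK1 : 1 ≤ K := by
    rw [hK]
    have h1 : (1:ℤ) ≤ |a|+|b|+|c|+1 := by
      have := abs_nonneg a; have := abs_nonneg b; have := abs_nonneg c; omega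
    exact_mod_cast h1
  have hcast : K = |(a:ℝ)| + |(b:ℝ)| + |(c:ℝ)| + 1 := by
    rw [hK]; push_cast; ring
  induction k with
  | zero => simp [rsAux]
  | succ k ih =>
    obtain ⟨ih1, ih2⟩ := ih
    have hKk : (0:ℝ) ≤ K^k := by positivity
    have habK : |(a:ℝ)| + |(b:ℝ)| ≤ K := by rw [hcast]; nlinarith [abs_nonneg ((c:ℝ))]
    have hcK : |(c:ℝ)| ≤ K := by rw [hcast]; nlinarith [abs_nonneg ((a:ℝ)), abs_nonneg ((b:ℝ))]
    have hna := abs_nonneg ((a:ℝ))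
    have hnb := abs_nonneg ((b:ℝ))
    have hnc := abs_nonneg ((c:ℝ))
    constructor
    · show |((a * (rsAux a b c k).2 - b * (rsAux a b c k).1 : ℤ):ℝ)| ≤ K^(k+1)
      push_cast
      calc |(a:ℝ) * ((rsAux a b c k).2:ℝ) - (b:ℝ) * ((rsAux a b c k).1:ℝ)|
          ≤ |(a:ℝ) * ((rsAux a b c k).2:ℝ)| + |(b:ℝ) * ((rsAux a b c k).1:ℝ)| := abs_sub _ _
        _ = |(a:ℝ)| * |((rsAux a b c k).2:ℝ)| + |(b:ℝ)| * |((rsAux a b c k).1:ℝ)| := by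
            rw [abs_mul, abs_mul]
        _ ≤ K^(k+1) := by
            rw [pow_succ]
            nlinarith [mul_le_mul_of_nonneg_left ih2 hna, mul_le_mul_of_nonneg_left ih1 hnb,
              mul_le_mul_of_nonneg_right habK hKk]
    · show |((-c * (rsAux a b c k).1 : ℤ):ℝ)| ≤ K^(k+1)
      push_cast
      calc |(-(c:ℝ)) * ((rsAux a b c k).1:ℝ)| = |(c:ℝ)| * |((rsAux a b c k).1:ℝ)| := by
            rw [abs_mul, abs_neg]
        _ ≤ K^(k+1) := by
            rw [pow_succ]
            nlinarith [mul_le_mul_of_nonneg_left ih1 hnc, mul_le_mul_of_nonneg_right hcK hKk]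



lemma coeff_le_height (P : Polynomial ℤ) (k : ℕ) : |(P.coeff k : ℝ)| ≤ intPolyHeight P := by
  rcases eq_or_ne (P.coeff k) 0 with h | h
  · simp [h, intPolyHeight]
  · have hk : k ∈ P.support := Polynomial.mem_support_iff.mpr h
    have : (P.coeff k).natAbs ≤ P.support.sup fun k => (P.coeff k).natAbs :=
      Finset.le_sup (f := fun k => (P.coeff k).natAbs) hk
    rw [intPolyHeight]
    calc |(P.coeff k : ℝ)| = ((P.coeff k).natAbs : ℝ) := by
          rw [Nat.cast_natAbs, Int.cast_abs]
      _ ≤ _ := Nat.cast_le.mpr this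

lemma one_le_height {P : Polynomial ℤ} (hP : P.Monic) : 1 ≤ intPolyHeight P := by
  have h0 : P ≠ 0 := hP.ne_zero
  have hk : P.natDegree ∈ P.support := by
    rw [Polynomial.mem_support_iff]
    simpa [hP.leadingCoeff] using one_ne_zero
  have h2 : 1 ≤ P.support.sup fun k => (P.coeff k).natAbs := by
    have h3 := Finset.le_sup (f := fun k => (P.coeff k).natAbs) hk
    rwa [show P.coeff P.natDegree = 1 from hP.leadingCoeff] at h3
  rw [intPolyHeight]
  exact_mod_cast h2


lemma evalLB (ξ : ℝ) (hξ : Irrational ξ) (a b c : ℤ) (ha : a ≠ 0)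
    (hroot : (a:ℝ)*ξ^2 + (b:ℝ)*ξ + (c:ℝ) = 0) (n : ℕ) :
    ∃ κ : ℝ, 0 < κ ∧ ∀ P : Polynomial ℤ, P.natDegree = n + 1 → 1 ≤ intPolyHeight P →
      eval ξ (P.map (Int.castRingHom ℝ)) ≠ 0 →
      κ / intPolyHeight P ≤ |eval ξ (P.map (Int.castRingHom ℝ))| := by
  obtain ⟨δ, hδ, hLiou⟩ := liouville2 ξ hξ a b c ha hroot
  set K : ℝ := ((|a|+|b|+|c|+1 : ℤ):ℝ) with hK
  have hK1 : 1 ≤ K := by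
    rw [hK]
    have h1 : (1:ℤ) ≤ |a|+|b|+|c|+1 := by
      have := abs_nonneg a; have := abs_nonneg b; have := abs_nonneg c; omega
    exact_mod_cast h1
  have ha1 : 1 ≤ |(a:ℝ)| := by
    rw [← Int.cast_abs]
    exact_mod_cast Int.one_le_abs ha
  set C₁ : ℝ := (n+2) * |(a:ℝ)|^(n+1) * K^(n+1) with hC₁
  have hC₁pos : 0 < C₁ := by positivity
  have hC₁1 : 1 ≤ C₁ := by
    rw [hC₁]
    have h1 : (1:ℝ) ≤ |(a:ℝ)|^(n+1) := one_le_pow₀ ha1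
    have h2 : (1:ℝ) ≤ K^(n+1) := one_le_pow₀ hK1
    have h3 : (1:ℝ) ≤ |(a:ℝ)|^(n+1) * K^(n+1) := by nlinarith
    nlinarith [Nat.cast_nonneg (α := ℝ) n]
  refine ⟨δ / (C₁ * |(a:ℝ)|^(n+1)), by positivity, ?_⟩
  intro P hdeg hH1 hne
  set N := intPolyHeight P with hN
  set R : ℤ := ∑ k ∈ Finset.range (n+2), P.coeff k * a^(n+1-k) * (rsAux a b c k).1 with hR
  set S : ℤ := ∑ k ∈ Finset.range (n+2), P.coeff k * a^(n+1-k) * (rsAux a b c k).2 with hS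
  -- the key identity
  have hkey : (a:ℝ)^(n+1) * eval ξ (P.map (Int.castRingHom ℝ)) = (R:ℝ) * ξ + (S:ℝ) := by
    have hdm : (P.map (Int.castRingHom ℝ)).natDegree < n + 2 := by
      calc (P.map (Int.castRingHom ℝ)).natDegree ≤ P.natDegree := natDegree_map_le
        _ < n + 2 := by omega
    rw [eval_eq_sum_range' hdm, Finset.mul_sum]
    have step : ∀ k ∈ Finset.range (n+2),
        (a:ℝ)^(n+1) * ((P.map (Int.castRingHom ℝ)).coeff k * ξ^k)
          = (P.coeff k : ℝ) * (a:ℝ)^(n+1-k) *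
            (((rsAux a b c k).1:ℝ) * ξ + ((rsAux a b c k).2:ℝ)) := by
      intro k hk
      rw [Finset.mem_range] at hk
      rw [coeff_map, ← rsAux_spec ξ a b c hroot k]
      have hpow : (a:ℝ)^(n+1-k) * (a:ℝ)^k = (a:ℝ)^(n+1) := by
        rw [← pow_add]
        congr 1
        omega
      simp only [eq_intCast]
      rw [← hpow]
      ring
    rw [Finset.sum_congr rfl step]
    have hRr : (R:ℝ) = ∑ k ∈ Finset.range (n+2),
        (P.coeff k : ℝ) * (a:ℝ)^(n+1-k) * ((rsAux a b c k).1:ℝ) := by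
      rw [hR]; push_cast; ring
    have hSr : (S:ℝ) = ∑ k ∈ Finset.range (n+2),
        (P.coeff k : ℝ) * (a:ℝ)^(n+1-k) * ((rsAux a b c k).2:ℝ) := by
      rw [hS]; push_cast; ring
    rw [hRr, hSr, Finset.sum_mul, ← Finset.sum_add_distrib]
    exact Finset.sum_congr rfl (fun k _ => by ring)
  -- bound |R|
  have hRbound : |(R:ℝ)| ≤ C₁ * N := by
    have hterm : ∀ k ∈ Finset.range (n+2),
        |(P.coeff k : ℝ) * (a:ℝ)^(n+1-k) * ((rsAux a b c k).1:ℝ)|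
          ≤ N * (|(a:ℝ)|^(n+1) * K^(n+1)) := by
      intro k hk
      rw [Finset.mem_range] at hk
      rw [abs_mul, abs_mul, abs_pow]
      have h1 : |(P.coeff k : ℝ)| ≤ N := coeff_le_height P k
      have h2 : |(a:ℝ)|^(n+1-k) ≤ |(a:ℝ)|^(n+1) := pow_le_pow_right₀ ha1 (by omega)
      have h3 : |((rsAux a b c k).1:ℝ)| ≤ K^k := (rsAux_bound a b c k).1
      have h4 : K^k ≤ K^(n+1) := pow_le_pow_right₀ hK1 (by omega)
      have h5 : |((rsAux a b c k).1:ℝ)| ≤ K^(n+1) := h3.trans h4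
      have hnn1 : (0:ℝ) ≤ |(P.coeff k : ℝ)| := abs_nonneg _
      have hnn2 : (0:ℝ) ≤ |(a:ℝ)|^(n+1-k) := by positivity
      have hnn3 : (0:ℝ) ≤ |((rsAux a b c k).1:ℝ)| := abs_nonneg _
      calc |(P.coeff k : ℝ)| * |(a:ℝ)|^(n+1-k) * |((rsAux a b c k).1:ℝ)|
          ≤ N * (|(a:ℝ)|^(n+1)) * K^(n+1) := by
            apply mul_le_mul (mul_le_mul h1 h2 hnn2 (le_trans hnn1 h1)) h5 hnn3
            positivity
        _ = N * (|(a:ℝ)|^(n+1) * K^(n+1)) := by ring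
    have hRr : (R:ℝ) = ∑ k ∈ Finset.range (n+2),
        (P.coeff k : ℝ) * (a:ℝ)^(n+1-k) * ((rsAux a b c k).1:ℝ) := by
      rw [hR]; push_cast; ring
    rw [hRr]
    calc |∑ k ∈ Finset.range (n+2), (P.coeff k : ℝ) * (a:ℝ)^(n+1-k) * ((rsAux a b c k).1:ℝ)|
        ≤ ∑ k ∈ Finset.range (n+2), |(P.coeff k : ℝ) * (a:ℝ)^(n+1-k) * ((rsAux a b c k).1:ℝ)| :=
          Finset.abs_sum_le_sum_abs _ _
      _ ≤ ∑ k ∈ Finset.range (n+2), N * (|(a:ℝ)|^(n+1) * K^(n+1)) :=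
          Finset.sum_le_sum hterm
      _ = (n+2) * (N * (|(a:ℝ)|^(n+1) * K^(n+1))) := by
          rw [Finset.sum_const, Finset.card_range]
          push_cast
          ring
      _ = C₁ * N := by rw [hC₁]; ring
  -- apply Liouville
  have hRSne : (R:ℝ) * ξ + (S:ℝ) ≠ 0 := by
    rw [← hkey]
    intro h
    rcases mul_eq_zero.mp h with h' | h'
    · exact (pow_ne_zero (n+1) (by exact_mod_cast ha : (a:ℝ) ≠ 0)) h'
    · exact hne h'
  have hLB := hLiou R S hRSne
  have hmaxle : max 1 |(R:ℝ)| ≤ C₁ * N := by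
    apply max_le _ hRbound
    nlinarith
  have hmaxpos : (0:ℝ) < max 1 |(R:ℝ)| := lt_of_lt_of_le one_pos (le_max_left _ _)
  have h6 : δ / (C₁ * N) ≤ δ / max 1 |(R:ℝ)| := by
    apply div_le_div_of_nonneg_left hδ.le hmaxpos hmaxle
  have h7 : δ / (C₁ * N) ≤ |(R:ℝ) * ξ + (S:ℝ)| := h6.trans hLB
  have h8 : |(R:ℝ) * ξ + (S:ℝ)| = |(a:ℝ)|^(n+1) * |eval ξ (P.map (Int.castRingHom ℝ))| := by
    rw [← hkey, abs_mul, abs_pow]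
  rw [h8] at h7
  have hNpos : (0:ℝ) < N := lt_of_lt_of_le one_pos hH1
  rw [div_div, div_le_iff₀ (by positivity : (0:ℝ) < C₁ * |(a:ℝ)|^(n+1) * N)]
  rw [div_le_iff₀ (by positivity : (0:ℝ) < C₁ * N)] at h7
  calc δ ≤ |(a:ℝ)|^(n+1) * |eval ξ (P.map (Int.castRingHom ℝ))| * (C₁ * N) := h7
    _ = |eval ξ (P.map (Int.castRingHom ℝ))| * (C₁ * |(a:ℝ)|^(n+1) * N) := by ring


lemma quad_int (ξ : ℝ) (hquad : ∃ p : Polynomial ℚ, p.degree = 2 ∧ Polynomial.aeval ξ p = 0) :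
    ∃ a b c : ℤ, a ≠ 0 ∧ (a:ℝ)*ξ^2 + (b:ℝ)*ξ + (c:ℝ) = 0 := by
  obtain ⟨p, hpdeg, hpev⟩ := hquad
  have hnd : p.natDegree = 2 := natDegree_eq_of_degree_eq_some (by exact_mod_cast hpdeg)
  have hp0 : p ≠ 0 := fun h => by simp [h] at hpdeg
  set q0 := p.coeff 0
  set q1 := p.coeff 1
  set q2 := p.coeff 2
  have hq2 : q2 ≠ 0 := by
    have : p.coeff p.natDegree ≠ 0 := by
      rw [← leadingCoeff]
      exact leadingCoeff_ne_zero.mpr hp0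
    rwa [hnd] at this
  have hev : (q2:ℝ)*ξ^2 + (q1:ℝ)*ξ + (q0:ℝ) = 0 := by
    have h := Polynomial.aeval_eq_sum_range (R := ℚ) (S := ℝ) (x := ξ) (p := p)
    rw [hnd] at h
    rw [hpev] at h  -- 0 = sum
    rw [Finset.sum_range_succ, Finset.sum_range_succ, Finset.sum_range_one] at h
    simp only [Rat.smul_def] at h
    push_cast at h
    linarith [h]
  refine ⟨q2.num * q0.den * q1.den, q1.num * q0.den * q2.den, q0.num * q1.den * q2.den,
    ?_, ?_⟩
  · have h1 : q2.num ≠ 0 := Rat.num_ne_zero.mpr hq2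
    have h2 : (q0.den : ℤ) ≠ 0 := by exact_mod_cast q0.den_nz
    have h3 : (q1.den : ℤ) ≠ 0 := by exact_mod_cast q1.den_nz
    exact mul_ne_zero (mul_ne_zero h1 h2) h3
  · have hnum : ∀ q : ℚ, ((q.num:ℝ)) = (q:ℝ) * (q.den:ℝ) := by
      intro q
      rw [Rat.cast_def]
      have : (q.den : ℝ) ≠ 0 := by exact_mod_cast q.den_nz
      field_simp
    push_cast
    rw [hnum q0, hnum q1, hnum q2]
    have e : ((q2:ℝ) * q2.den) * q0.den * q1.den * ξ^2 + ((q1:ℝ) * q1.den) * q0.den * q2.den * ξ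
        + ((q0:ℝ) * q0.den) * q1.den * q2.den
        = (q0.den:ℝ) * q1.den * q2.den * ((q2:ℝ)*ξ^2 + (q1:ℝ)*ξ + (q0:ℝ)) := by ring
    rw [e, hev, mul_zero]


lemma height_nonneg (P : Polynomial ℤ) : 0 ≤ intPolyHeight P := Nat.cast_nonneg _

-- card of conjRoots
lemma conjRoots_card {P : Polynomial ℤ} (hP : P.Monic) :
    Multiset.card (conjRoots P) = P.natDegree := by
  have hm : (P.map (Int.castRingHom ℂ)).Monic := hP.map _
  have hd : (P.map (Int.castRingHom ℂ)).natDegree = P.natDegree :=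
    hP.natDegree_map _
  rw [conjRoots, ← hd]
  exact splits_iff_card_roots.mp (IsAlgClosed.splits _)

-- product formula
lemma prod_formula {P : Polynomial ℤ} (hP : P.Monic) (ξ : ℝ) :
    ((conjRoots P).map (fun z => ‖(ξ:ℂ) - z‖)).prod
      = |eval ξ (P.map (Int.castRingHom ℝ))| := by
  have hm : (P.map (Int.castRingHom ℂ)).Monic := hP.map _
  have hfac := (IsAlgClosed.splits _).eq_prod_roots_of_monic hm
  have heval : eval (ξ:ℂ) (P.map (Int.castRingHom ℂ))
      = ((conjRoots P).map (fun z => (ξ:ℂ) - z)).prod := by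
    conv_lhs => rw [hfac]
    rw [eval_multiset_prod, Multiset.map_map, conjRoots]
    congr 1
    apply Multiset.map_congr rfl
    intro z _
    simp
  have hre : eval (ξ:ℂ) (P.map (Int.castRingHom ℂ))
      = ((eval ξ (P.map (Int.castRingHom ℝ)) : ℝ) : ℂ) := by
    have hcomp : (Int.castRingHom ℂ) = Complex.ofRealHom.comp (Int.castRingHom ℝ) := by
      ext m
      simp
    rw [hcomp, ← Polynomial.map_map, eval_map]
    have : ((ξ:ℝ):ℂ) = Complex.ofRealHom ξ := rfl
    rw [this, eval₂_at_apply]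
    rfl
  have := congrArg (normHom : ℂ →*₀ ℝ) (heval.symm.trans hre)
  rw [map_multiset_prod] at this
  rw [Multiset.map_map] at this
  change (Multiset.map (fun x => ‖(ξ:ℂ) - x‖) (conjRoots P)).prod = ‖((eval ξ (P.map (Int.castRingHom ℝ)) : ℝ) : ℂ)‖ at this
  convert this using 2
  rw [Complex.norm_real, Real.norm_eq_abs]
  -- ⊢ ...
-- root bound
lemma root_bound {P : Polynomial ℤ} (hP : P.Monic) {z : ℂ} (hz : z ∈ conjRoots P) :
    ‖z‖ ≤ intPolyHeight P + 1 := by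
  have hm : (P.map (Int.castRingHom ℂ)).Monic := hP.map _
  have h0 : (P.map (Int.castRingHom ℂ)) ≠ 0 := hm.ne_zero
  have hroot : (P.map (Int.castRingHom ℂ)).IsRoot z := (mem_roots h0).mp hz
  have hlt := hroot.norm_lt_cauchyBound h0
  have hcb : (cauchyBound (P.map (Int.castRingHom ℂ)) : ℝ) ≤ intPolyHeight P + 1 := by
    rw [cauchyBound]
    have hlc : ‖(P.map (Int.castRingHom ℂ)).leadingCoeff‖₊ = 1 := by
      rw [hm.leadingCoeff]
      simp
    rw [hlc, div_one]
    push_cast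
    set Nb : ℝ≥0 := ⟨intPolyHeight P, height_nonneg P⟩ with hNb
    have hsup : ∀ k ∈ Finset.range (P.map (Int.castRingHom ℂ)).natDegree,
        ‖(P.map (Int.castRingHom ℂ)).coeff k‖₊ ≤ Nb := by
      intro k _
      rw [← NNReal.coe_le_coe]
      simp only [coe_nnnorm, hNb, NNReal.coe_mk]
      rw [coeff_map]
      have h9 : ‖((P.coeff k : ℤ) : ℂ)‖ = |(P.coeff k : ℝ)| := by
        rw [← Real.norm_eq_abs, ← Complex.norm_real]
        norm_cast
        rw [Int.norm_eq_abs, Int.cast_abs]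
      rw [show ((Int.castRingHom ℂ) (P.coeff k)) = ((P.coeff k : ℤ) : ℂ) from rfl, h9]
      exact coeff_le_height P k
    have h10' : ((Finset.range (P.map (Int.castRingHom ℂ)).natDegree).sup
        (fun k => ‖(P.map (Int.castRingHom ℂ)).coeff k‖₊) : ℝ≥0) ≤ Nb :=
      Finset.sup_le hsup
    have h10 := NNReal.coe_le_coe.mpr h10'
    have h11 : (Nb : ℝ) = intPolyHeight P := rfl
    linarith
  calc ‖z‖ = ‖z‖ := rfl
    _ ≤ (cauchyBound (P.map (Int.castRingHom ℂ)) : ℝ) := hlt.le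
    _ ≤ intPolyHeight P + 1 := hcb


lemma multiset_prod_map_le {α : Type*} (s : Multiset α) (f : α → ℝ) (t : ℝ)
    (h0 : ∀ x ∈ s, 0 ≤ f x) (h : ∀ x ∈ s, f x ≤ t) :
    (s.map f).prod ≤ t ^ (Multiset.card s) := by
  induction s using Multiset.induction_on with
  | empty => simp
  | cons a s ih =>
    rw [Multiset.map_cons, Multiset.prod_cons, Multiset.card_cons, pow_succ']
    have hfa0 : 0 ≤ f a := h0 a (Multiset.mem_cons_self a s)
    have hfat : f a ≤ t := h a (Multiset.mem_cons_self a s)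
    have hps : (s.map f).prod ≤ t ^ (Multiset.card s) :=
      ih (fun x hx => h0 x (Multiset.mem_cons_of_mem hx))
        (fun x hx => h x (Multiset.mem_cons_of_mem hx))
    have hpnn : 0 ≤ (s.map f).prod :=
      Multiset.prod_nonneg (by
        intro x hx
        obtain ⟨y, hy, rfl⟩ := Multiset.mem_map.mp hx
        exact h0 y (Multiset.mem_cons_of_mem hy))
    exact mul_le_mul hfat hps hpnn (hfa0.trans hfat)

lemma evalC (P : Polynomial ℤ) (ξ : ℝ) :
    eval (ξ:ℂ) (P.map (Int.castRingHom ℂ)) = ((eval ξ (P.map (Int.castRingHom ℝ)) : ℝ) : ℂ) := by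
  have hcomp : (Int.castRingHom ℂ) = Complex.ofRealHom.comp (Int.castRingHom ℝ) := by
    ext m
    simp
  rw [hcomp, ← Polynomial.map_map, eval_map]
  have h : ((ξ:ℝ):ℂ) = Complex.ofRealHom ξ := rfl
  rw [h, eval₂_at_apply]
  rfl


/-- Optimality for quadratic irrational `ξ`: there is `c > 0` such that for every algebraic
integer `α` of degree `n+1` (encoded by its monic irreducible polynomial `P ∈ ℤ[T]`) none of
whose conjugates equals `ξ`, and any choice of `n` conjugates, some chosen conjugate `z`
satisfies `|ξ - z| ≥ c H(α)^(-2/n)`. -/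
theorem quadratic_irrational_optimality
    (ξ : ℝ) (hξ : Irrational ξ)
    (hquad : ∃ p : Polynomial ℚ, p.degree = 2 ∧ Polynomial.aeval ξ p = 0)
    (n : ℕ) (hn : 0 < n) :
    ∃ c : ℝ, 0 < c ∧
      ∀ P : Polynomial ℤ, P.Monic → Irreducible P → P.natDegree = n + 1 →
        (∀ z ∈ conjRoots P, z ≠ (ξ : ℂ)) →
        ∀ S : Multiset ℂ, S ≤ conjRoots P → Multiset.card S = n →
          ∃ z ∈ S, c * intPolyHeight P ^ (-2 / (n : ℝ)) ≤ ‖(ξ : ℂ) - z‖ := by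
  obtain ⟨a, b, c, ha, hroot⟩ := quad_int ξ hquad
  obtain ⟨κ, hκ, hLB⟩ := evalLB ξ hξ a b c ha hroot n
  set c₃ : ℝ := κ / (|ξ| + 2) with hc₃
  have hc₃pos : 0 < c₃ := by positivity
  refine ⟨c₃ ^ ((n:ℝ)⁻¹) / 2, by positivity, ?_⟩
  intro P hmono hirr hdeg hconj S hS hScard
  set f : ℂ → ℝ := fun z => ‖(ξ:ℂ) - z‖ with hf
  set N := intPolyHeight P with hN
  have hH1 : 1 ≤ N := one_le_height hmono
  have hNpos : (0:ℝ) < N := lt_of_lt_of_le one_pos hH1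
  have hPc0 : P.map (Int.castRingHom ℂ) ≠ 0 := (hmono.map _).ne_zero
  have hne : eval ξ (P.map (Int.castRingHom ℝ)) ≠ 0 := by
    intro h
    have hmem : (ξ:ℂ) ∈ conjRoots P := by
      rw [conjRoots, mem_roots hPc0]
      show eval (ξ:ℂ) (P.map (Int.castRingHom ℂ)) = 0
      rw [evalC, h]
      simp
    exact hconj _ hmem rfl
  have hLB' : κ / N ≤ |eval ξ (P.map (Int.castRingHom ℝ))| := hLB P hdeg hH1 hne
  have hcard : Multiset.card (conjRoots P) = n + 1 := by
    rw [conjRoots_card hmono, hdeg]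
  set T := conjRoots P - S with hT
  have hST : S + T = conjRoots P := add_tsub_cancel_of_le hS
  have hTcard : Multiset.card T = 1 := by
    have h2 := congrArg Multiset.card hST
    rw [Multiset.card_add, hScard, hcard] at h2
    omega
  obtain ⟨w, hw⟩ := Multiset.card_eq_one.mp hTcard
  have hwmem : w ∈ conjRoots P := by
    rw [← hST, hw]
    simp
  have hwub : f w ≤ (|ξ| + 2) * N := by
    have h1 : ‖(ξ:ℂ) - w‖ ≤ ‖(ξ:ℂ)‖ + ‖w‖ := by
      exact norm_sub_le _ _
    have h2 : ‖w‖ ≤ N + 1 := root_bound hmono hwmem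
    have h3 : ‖(ξ:ℂ)‖ = |ξ| := by rw [Complex.norm_real, Real.norm_eq_abs]
    rw [hf]
    simp only
    nlinarith [abs_nonneg ξ]
  have hwpos : 0 < f w := by
    rw [hf]
    simp only
    rw [norm_pos_iff]
    intro h
    exact hconj w hwmem (by linear_combination -h)
  have hprod := prod_formula hmono ξ
  have hsplit : ((conjRoots P).map f).prod = (S.map f).prod * f w := by
    rw [← hST, hw, Multiset.map_add, Multiset.prod_add]
    simp
  have hSnn : 0 ≤ (S.map f).prod :=
    Multiset.prod_nonneg (by
      intro x hx
      obtain ⟨y, hy, rfl⟩ := Multiset.mem_map.mp hx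
      exact norm_nonneg _)
  have hSprod : c₃ / N^2 ≤ (S.map f).prod := by
    have h1 : κ / N ≤ (S.map f).prod * f w := by
      rw [← hsplit, hprod]
      exact hLB'
    have h2 : (S.map f).prod * f w ≤ (S.map f).prod * ((|ξ| + 2) * N) := by
      apply mul_le_mul_of_nonneg_left hwub hSnn
    have h3 : κ / N ≤ (S.map f).prod * ((|ξ| + 2) * N) := h1.trans h2
    rw [div_le_iff₀ hNpos] at h3
    rw [hc₃, div_div, div_le_iff₀ (by positivity : (0:ℝ) < (|ξ| + 2) * N^2)]
    nlinarith
  by_contra hcon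
  push_neg at hcon
  set t : ℝ := c₃ ^ ((n:ℝ)⁻¹) / 2 * N ^ (-2 / (n:ℝ)) with ht
  have htpos : 0 < t := by
    rw [ht]
    have := Real.rpow_pos_of_pos hc₃pos ((n:ℝ)⁻¹)
    have := Real.rpow_pos_of_pos hNpos (-2 / (n:ℝ))
    positivity
  have hub : (S.map f).prod ≤ t ^ n := by
    rw [← hScard]
    exact multiset_prod_map_le S f t (fun x _ => norm_nonneg _)
      (fun x hx => (hcon x hx).le)
  have hnne : ((n:ℝ)) ≠ 0 := Nat.cast_ne_zero.mpr hn.ne'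
  have htn : t ^ n = c₃ / 2 ^ n / N ^ 2 := by
    rw [ht, mul_pow, div_pow]
    rw [← Real.rpow_natCast (c₃ ^ ((n:ℝ)⁻¹)) n, ← Real.rpow_natCast (N ^ (-2 / (n:ℝ))) n]
    rw [← Real.rpow_mul hc₃pos.le, ← Real.rpow_mul hNpos.le]
    rw [inv_mul_cancel₀ hnne, Real.rpow_one]
    rw [div_mul_cancel₀ _ hnne]
    rw [show ((-2:ℝ)) = ((-2:ℤ):ℝ) by norm_num, Real.rpow_intCast]
    rw [zpow_neg, zpow_two]
    ring
  have h2n : (2:ℝ) ≤ 2 ^ n := by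
    calc (2:ℝ) = 2^1 := (pow_one 2).symm
      _ ≤ 2^n := pow_le_pow_right₀ (by norm_num) hn
  have hfinal : (S.map f).prod < c₃ / N ^ 2 := by
    calc (S.map f).prod ≤ t ^ n := hub
      _ = c₃ / 2 ^ n / N ^ 2 := htn
      _ = c₃ / (2 ^ n * N ^ 2) := by rw [div_div]
      _ < c₃ / N ^ 2 := by
        apply div_lt_div_of_pos_left hc₃pos (by positivity)
        nlinarith [mul_pos hNpos hNpos]
  linarith [hSprod, hfinal]
end

section
/- Let ξ be a rational number and let n be a positive integer. There exists a constant c > 0 (depending only on ξ and n) such that for every algebraic integer α of degree n+1 over ℚ with α ≠ ξ, one has max_{ᾱ ≠ α} |ξ − ᾱ| ≥ c · H(α)^{-1/n}, where the maximum is over all conjugates ᾱ of α different from α itself. -/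
open Polynomial

-- integrality lemma
lemma myInt (P : Polynomial ℤ) (ξ : ℚ) :
    ∃ N : ℤ, (N : ℚ) = (ξ.den : ℚ) ^ P.natDegree * (P.map (Int.castRingHom ℚ)).eval (ξ : ℚ) := by
  set d := P.natDegree
  have hden : (ξ.den : ℚ) ≠ 0 := Nat.cast_ne_zero.mpr ξ.den_nz
  have hnum : (ξ.num : ℚ) = ξ * ξ.den := by
    exact (Rat.mul_den_eq_num ξ).symm
  refine ⟨∑ i ∈ Finset.range (d + 1), P.coeff i * ξ.num ^ i * ξ.den ^ (d - i), ?_⟩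
  rw [eval_map, Polynomial.eval₂_eq_sum_range, Finset.mul_sum]
  push_cast
  refine Finset.sum_congr rfl fun i hi => ?_
  have hid : i ≤ d := Nat.lt_succ_iff.mp (Finset.mem_range.mp hi)
  rw [hnum]
  rw [mul_pow]
  have : (ξ.den : ℚ) ^ i * (ξ.den : ℚ) ^ (d - i) = (ξ.den : ℚ) ^ d := by
    rw [← pow_add]; congr 1; omega
  rw [← this]
  simp only [eq_intCast]
  ring

lemma myLB (P : Polynomial ℤ) (ξ : ℚ)
    (h0 : (P.map (Int.castRingHom ℚ)).eval (ξ : ℚ) ≠ 0) :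
    1 / (ξ.den : ℚ) ^ P.natDegree ≤ |(P.map (Int.castRingHom ℚ)).eval (ξ : ℚ)| := by
  obtain ⟨N, hN⟩ := myInt P ξ
  have hdpos : (0:ℚ) < (ξ.den : ℚ) ^ P.natDegree := by positivity
  have hN0 : N ≠ 0 := by
    intro h
    rw [h, Int.cast_zero] at hN
    exact h0 ((mul_eq_zero.mp hN.symm).resolve_left hdpos.ne')
  have h1 : (1 : ℚ) ≤ |(N : ℚ)| := by
    rw [← Int.cast_abs]
    exact_mod_cast Int.one_le_abs hN0
  rw [div_le_iff₀ hdpos, mul_comm, ← abs_of_pos hdpos, ← abs_mul, ← hN]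
  exact h1

lemma myNonzero (P : Polynomial ℤ) (ξ : ℚ) (hm : P.Monic) (hirr : Irreducible P)
    (hd : 2 ≤ P.natDegree) :
    (P.map (Int.castRingHom ℚ)).eval (ξ : ℚ) ≠ 0 := by
  intro h
  have hirrQ : Irreducible (P.map (Int.castRingHom ℚ)) :=
    (IsPrimitive.Int.irreducible_iff_irreducible_map_cast hm.isPrimitive).mp hirr
  have hdvd : (X - C ξ) ∣ P.map (Int.castRingHom ℚ) := dvd_iff_isRoot.mpr h
  obtain ⟨g, hg⟩ := hdvd
  rcases hirrQ.isUnit_or_isUnit hg with hu | hu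
  · exact (Polynomial.not_isUnit_X_sub_C ξ) hu
  · have hdeg : (P.map (Int.castRingHom ℚ)).natDegree = P.natDegree :=
      natDegree_map_eq_of_injective (Int.cast_injective) P
    have hg0 : g.natDegree = 0 := natDegree_eq_zero_of_isUnit hu
    have hgne : g ≠ 0 := by
      rintro rfl
      rw [mul_zero] at hg
      exact (hm.map (Int.castRingHom ℚ)).ne_zero hg
    have : (P.map (Int.castRingHom ℚ)).natDegree = 1 + g.natDegree := by
      rw [hg, natDegree_mul (X_sub_C_ne_zero ξ) hgne, natDegree_X_sub_C]
    omega

lemma myHeightOne (P : Polynomial ℤ) (hm : P.Monic) : 1 ≤ intPolyHeight P := by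
  have h1 : P.natDegree ∈ P.support := by
    rw [mem_support_iff, hm.coeff_natDegree]; exact one_ne_zero
  have h2 : 1 ≤ P.support.sup fun k => (P.coeff k).natAbs := by
    simpa [hm.coeff_natDegree] using
      Finset.le_sup (f := fun k => (P.coeff k).natAbs) h1
  unfold intPolyHeight
  exact_mod_cast h2

lemma myCoeffLe (P : Polynomial ℤ) (k : ℕ) :
    ((P.coeff k).natAbs : ℝ) ≤ intPolyHeight P := by
  unfold intPolyHeight
  by_cases h : P.coeff k = 0
  · simp [h]
  · exact_mod_cast Finset.le_sup (f := fun k => (P.coeff k).natAbs) (mem_support_iff.mpr h)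

lemma myNormCoeff (P : Polynomial ℤ) (i : ℕ) :
    ‖((P.coeff i : ℤ) : ℂ)‖ = ((P.coeff i).natAbs : ℝ) := by
  rw [← Complex.ofReal_intCast, Complex.norm_real, Real.norm_eq_abs, Nat.cast_natAbs]
  push_cast
  rfl

lemma myRootBound (P : Polynomial ℤ) (hm : P.Monic) (z : ℂ)
    (hz : (P.map (Int.castRingHom ℂ)).IsRoot z) : ‖z‖ ≤ intPolyHeight P + 1 := by
  have hne : P.map (Int.castRingHom ℂ) ≠ 0 := (hm.map _).ne_zero
  have hlt := hz.norm_lt_cauchyBound hne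
  have hH0 : (0:ℝ) ≤ intPolyHeight P := by unfold intPolyHeight; positivity
  have hS : (((Finset.range (P.map (Int.castRingHom ℂ)).natDegree).sup
      fun i => ‖(P.map (Int.castRingHom ℂ)).coeff i‖₊ : NNReal) : ℝ) ≤ intPolyHeight P := by
    have h : ((Finset.range (P.map (Int.castRingHom ℂ)).natDegree).sup
        fun i => ‖(P.map (Int.castRingHom ℂ)).coeff i‖₊) ≤ (intPolyHeight P).toNNReal := by
      apply Finset.sup_le
      intro i _
      rw [← NNReal.coe_le_coe, Real.coe_toNNReal _ hH0, coe_nnnorm, coeff_map]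
      calc ‖(Int.castRingHom ℂ) (P.coeff i)‖ = ((P.coeff i).natAbs : ℝ) := by
            rw [eq_intCast]; exact myNormCoeff P i
        _ ≤ intPolyHeight P := myCoeffLe P i
    calc (((Finset.range (P.map (Int.castRingHom ℂ)).natDegree).sup
          fun i => ‖(P.map (Int.castRingHom ℂ)).coeff i‖₊ : NNReal) : ℝ)
        ≤ ((intPolyHeight P).toNNReal : ℝ) := NNReal.coe_le_coe.mpr h
      _ = intPolyHeight P := Real.coe_toNNReal _ hH0
  have hcb : (cauchyBound (P.map (Int.castRingHom ℂ)) : ℝ) ≤ intPolyHeight P + 1 := by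
    rw [cauchyBound]
    have hlc : ‖(P.map (Int.castRingHom ℂ)).leadingCoeff‖₊ = 1 := by
      rw [(hm.map _).leadingCoeff]; simp
    rw [hlc, div_one]
    push_cast
    linarith
  calc ‖z‖ = (‖z‖₊ : ℝ) := (coe_nnnorm z).symm
    _ ≤ (cauchyBound (P.map (Int.castRingHom ℂ)) : ℝ) := by exact_mod_cast hlt.le
    _ ≤ intPolyHeight P + 1 := hcb

lemma myNnnormProd (s : Multiset ℂ) : ‖s.prod‖₊ = (s.map fun x => ‖x‖₊).prod := by
  induction s using Multiset.induction with
  | empty => simp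
  | cons a s ih => simp [nnnorm_mul, ih]

/-- Rational `ξ`, algebraic integers: there is `c > 0` such that for every algebraic integer
`α ≠ ξ` of degree `n+1` (encoded by its monic irreducible polynomial `P ∈ ℤ[T]`), some
conjugate `z ≠ α` satisfies `|ξ - z| ≥ c H(α)^(-1/n)`. -/
theorem rational_xi_algebraic_integer_lower_bound
    (ξ : ℚ) (n : ℕ) (hn : 0 < n) :
    ∃ c : ℝ, 0 < c ∧
      ∀ (P : Polynomial ℤ) (α : ℂ), P.Monic → Irreducible P → P.natDegree = n + 1 →
        Polynomial.aeval α P = 0 → α ≠ (ξ : ℂ) →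
        ∃ z ∈ conjRoots P, z ≠ α ∧
          c * intPolyHeight P ^ (-1 / (n : ℝ)) ≤ ‖(ξ : ℂ) - z‖ := by
  set c0 : ℝ := 1 / ((ξ.den : ℝ) ^ (n + 1) * (|(ξ : ℝ)| + 2)) with hc0def
  have hc0pos : 0 < c0 := by
    apply div_pos one_pos
    apply mul_pos (by positivity)
    positivity
  refine ⟨c0 ^ (1 / (n : ℝ)), Real.rpow_pos_of_pos hc0pos _, ?_⟩
  intro P α hm hirr hdeg hroot hαξ
  set f : Polynomial ℂ := P.map (Int.castRingHom ℂ) with hfdef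
  have hfm : f.Monic := hm.map _
  have hfne : f ≠ 0 := hfm.ne_zero
  have hfdeg : f.natDegree = n + 1 := by
    rw [hfdef, natDegree_map_eq_of_injective (by exact_mod_cast Int.cast_injective) P, hdeg]
  -- α is a root of f
  have hαroot : f.IsRoot α := by
    rw [IsRoot.def, hfdef, eval_map]
    rw [aeval_def] at hroot
    exact hroot
  have hαmem : α ∈ f.roots := (mem_roots hfne).mpr hαroot
  -- roots card and nodup
  have hcard : Multiset.card f.roots = n + 1 := by
    rw [← hfdeg]
    exact splits_iff_card_roots.mp (IsAlgClosed.splits f)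
  have hirrQ : Irreducible (P.map (Int.castRingHom ℚ)) :=
    (IsPrimitive.Int.irreducible_iff_irreducible_map_cast hm.isPrimitive).mp hirr
  have hsep : f.Separable := by
    have h1 : (P.map (Int.castRingHom ℚ)).Separable := hirrQ.separable
    have h2 := h1.map (f := Rat.castHom ℂ)
    rw [map_map] at h2
    have : (Rat.castHom ℂ).comp (Int.castRingHom ℚ) = Int.castRingHom ℂ := by
      ext1
      simp
    rwa [this] at h2
  have hnodup : f.roots.Nodup := nodup_roots hsep
  -- the set of other conjugates
  set T : Multiset ℂ := f.roots.erase α with hTdef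
  have hTcard : Multiset.card T = n := by
    rw [hTdef, Multiset.card_erase_of_mem hαmem, hcard]; rfl
  have hαT : α ∉ T := hnodup.notMem_erase
  have hTne : T.toFinset.Nonempty := by
    rw [← Finset.card_pos, Multiset.toFinset_card_of_nodup (hnodup.erase α), hTcard]
    exact hn
  obtain ⟨z, hzT, hzmax⟩ := T.toFinset.exists_max_image (fun w => ‖(ξ : ℂ) - w‖₊) hTne
  rw [Multiset.mem_toFinset] at hzT
  have hzroots : z ∈ f.roots := Multiset.mem_of_mem_erase hzT
  have hzα : z ≠ α := fun h => hαT (h ▸ hzT)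
  refine ⟨z, hzroots, hzα, ?_⟩
  -- the product formula
  have hprod : ‖f.eval (ξ : ℂ)‖₊ = (f.roots.map fun a => ‖(ξ : ℂ) - a‖₊).prod := by
    conv_lhs => rw [(IsAlgClosed.splits f).eq_prod_roots_of_monic hfm]
    rw [eval_multiset_prod, Multiset.map_map, myNnnormProd, Multiset.map_map]
    exact congrArg Multiset.prod (Multiset.map_congr rfl fun x _ => by simp)
  set M : NNReal := ‖(ξ : ℂ) - z‖₊ with hMdef
  set A : NNReal := ‖(ξ : ℂ) - α‖₊ with hAdef
  set H : ℝ := intPolyHeight P with hHdef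
  have hH1 : 1 ≤ H := myHeightOne P hm
  have hH0 : (0:ℝ) < H := lt_of_lt_of_le one_pos hH1
  have hroots_eq : f.roots = α ::ₘ T := (Multiset.cons_erase hαmem).symm
  have hprodle : ‖f.eval (ξ : ℂ)‖₊ ≤ A * M ^ n := by
    rw [hprod, hroots_eq, Multiset.map_cons, Multiset.prod_cons]
    apply mul_le_mul_right
    calc (T.map fun a => ‖(ξ : ℂ) - a‖₊).prod
        ≤ M ^ Multiset.card (T.map fun a => ‖(ξ:ℂ) - a‖₊) :=
          Multiset.prod_le_pow_card _ _ (fun x hx => by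
            obtain ⟨w, hw, rfl⟩ := Multiset.mem_map.mp hx
            exact hzmax w (Multiset.mem_toFinset.mpr hw))
      _ = M ^ n := by rw [Multiset.card_map, hTcard]
  -- identify eval over ℂ with eval over ℚ
  have hevalQ : f.eval (ξ : ℂ) = (((P.map (Int.castRingHom ℚ)).eval (ξ:ℚ) : ℚ) : ℂ) := by
    have hmapeq : f = (P.map (Int.castRingHom ℚ)).map (Rat.castHom ℂ) := by
      have hcomp : (Rat.castHom ℂ).comp (Int.castRingHom ℚ) = Int.castRingHom ℂ := by
        ext1; simp
      rw [hfdef, map_map, hcomp]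
    rw [hmapeq, eval_map]
    have := eval₂_at_apply (p := P.map (Int.castRingHom ℚ)) (Rat.castHom ℂ) ξ
    simpa using this
  have h0 := myNonzero P ξ hm hirr (by omega)
  have hlow := myLB P ξ h0
  rw [hdeg] at hlow
  have hnormQ : ‖f.eval (ξ : ℂ)‖ = |(((P.map (Int.castRingHom ℚ)).eval (ξ:ℚ) : ℚ) : ℝ)| := by
    rw [hevalQ]
    rw [show (((P.map (Int.castRingHom ℚ)).eval (ξ:ℚ) : ℚ) : ℂ)
        = ((((P.map (Int.castRingHom ℚ)).eval (ξ:ℚ) : ℚ) : ℝ) : ℂ) by push_cast; ring]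
    rw [Complex.norm_real, Real.norm_eq_abs]
  have hchain : 1 / (ξ.den : ℝ) ^ (n+1) ≤ (A:ℝ) * (M:ℝ)^n := by
    have h1 : (1 / (ξ.den : ℝ) ^ (n+1)) ≤ ‖f.eval (ξ : ℂ)‖ := by
      rw [hnormQ]
      have := hlow
      have h2 : ((1 / (ξ.den : ℚ) ^ (n+1) : ℚ) : ℝ)
          ≤ ((|(P.map (Int.castRingHom ℚ)).eval (ξ:ℚ)| : ℚ) : ℝ) := Rat.cast_le.mpr this
      push_cast at h2
      convert h2 using 2
    have h3 : ‖f.eval (ξ : ℂ)‖ ≤ (A:ℝ) * (M:ℝ)^n := by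
      have := hprodle
      rw [← NNReal.coe_le_coe] at this
      push_cast at this
      rwa [coe_nnnorm] at this
    linarith
  -- bound A
  have hA : (A:ℝ) ≤ (|(ξ:ℝ)| + 2) * H := by
    have hnξ : ‖((ξ:ℚ):ℂ)‖ = |(ξ:ℝ)| := by
      rw [show ((ξ:ℚ):ℂ) = (((ξ:ℚ):ℝ):ℂ) by push_cast; ring, Complex.norm_real,
        Real.norm_eq_abs]
    have hαb : ‖α‖ ≤ H + 1 := myRootBound P hm α hαroot
    have h4 : (A:ℝ) ≤ |(ξ:ℝ)| + (H + 1) := by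
      rw [hAdef, coe_nnnorm]
      calc ‖(ξ:ℂ) - α‖ ≤ ‖((ξ:ℚ):ℂ)‖ + ‖α‖ := norm_sub_le _ _
        _ ≤ |(ξ:ℝ)| + (H + 1) := by rw [hnξ]; linarith
    nlinarith [abs_nonneg (ξ:ℝ)]
  have hApos : (0:ℝ) < A := by
    rw [hAdef, coe_nnnorm]
    rw [norm_pos_iff, sub_ne_zero]
    exact fun h => hαξ h.symm
  have hMn0 : (0:ℝ) ≤ (M:ℝ) := NNReal.coe_nonneg M
  have hkey : c0 / H ≤ (M:ℝ)^n := by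
    have h2 : 1 / (ξ.den : ℝ) ^ (n+1) ≤ ((|(ξ:ℝ)| + 2) * H) * (M:ℝ)^n := by
      calc 1 / (ξ.den : ℝ) ^ (n+1) ≤ (A:ℝ) * (M:ℝ)^n := hchain
        _ ≤ ((|(ξ:ℝ)| + 2) * H) * (M:ℝ)^n := by
          apply mul_le_mul_of_nonneg_right hA (by positivity)
    have hden : (0:ℝ) < (ξ.den : ℝ) ^ (n+1) := by positivity
    rw [div_le_iff₀ hden] at h2
    rw [hc0def, div_div, div_le_iff₀ (by positivity)]
    nlinarith [h2]
  have hMpos : (0:ℝ) < (M:ℝ) := by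
    rcases hMn0.lt_or_eq with h | h
    · exact h
    · exfalso
      have : (0:ℝ) < c0 / H := div_pos hc0pos hH0
      rw [← h] at hkey
      rw [zero_pow hn.ne'] at hkey
      linarith
  have hgoal : c0 ^ (1/(n:ℝ)) * H ^ (-1/(n:ℝ)) ≤ (M:ℝ) := by
    have hnne : (n:ℝ) ≠ 0 := Nat.cast_ne_zero.mpr hn.ne'
    calc c0 ^ (1/(n:ℝ)) * H ^ (-1/(n:ℝ)) = (c0/H) ^ (1/(n:ℝ)) := by
          rw [neg_div, Real.rpow_neg hH0.le, Real.div_rpow hc0pos.le hH0.le]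
          ring
      _ ≤ ((M:ℝ)^n) ^ (1/(n:ℝ)) := Real.rpow_le_rpow (by positivity) hkey (by positivity)
      _ = (M:ℝ) := by
          rw [← Real.rpow_natCast (M:ℝ) n, ← Real.rpow_mul hMn0,
            mul_one_div_cancel hnne, Real.rpow_one]
  calc c0 ^ (1/(n:ℝ)) * H ^ (-1/(n:ℝ)) ≤ (M:ℝ) := hgoal
    _ = ‖(ξ:ℂ) - z‖ := by rw [hMdef, coe_nnnorm]
end

section
/- Let ξ be an irrational real number, let n be a positive integer, and let q ≥ 1 be the denominator of a convergent of the continued fraction expansion of ξ. Then every nonzero polynomial P with integer coefficients of degree at most n satisfies max_{0 ≤ k ≤ n} |P^{[k]}(ξ)| · q^{n−2k} ≥ (2^{n²} (n+1)!)^{-1}. -/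
open Polynomial

lemma contsAux_int (ξ : ℝ) : ∀ i, ∃ A B : ℤ,
    ((GenContFract.of ξ).contsAux i).a = (A : ℝ) ∧ ((GenContFract.of ξ).contsAux i).b = (B : ℝ) := by
  intro i
  induction i using Nat.strong_induction_on with
  | _ i ih =>
    match i with
    | 0 => exact ⟨1, 0, by simp, by simp⟩
    | 1 => exact ⟨⌊ξ⌋, 1, by simp [GenContFract.of_h_eq_floor], by simp⟩
    | (m+2) =>
      obtain ⟨A, B, hA, hB⟩ := ih m (by omega)
      obtain ⟨A', B', hA', hB'⟩ := ih (m+1) (by omega)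
      cases hs : (GenContFract.of ξ).s.get? m with
      | none =>
        refine ⟨A', B', ?_, ?_⟩ <;> simp [GenContFract.contsAux, hs, hA', hB']
      | some gp =>
        have ha1 : gp.a = 1 :=
          GenContFract.of_partNum_eq_one (GenContFract.partNum_eq_s_a hs)
        obtain ⟨z, hz⟩ := GenContFract.exists_int_eq_of_partDen (GenContFract.partDen_eq_s_b hs)
        refine ⟨z * A' + A, z * B' + B, ?_, ?_⟩ <;>
          simp [GenContFract.contsAux, hs, GenContFract.nextConts, ha1, hz, hA, hB, hA', hB',
            GenContFract.nextNum, GenContFract.nextDen]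

lemma conv_facts (ξ : ℝ) (hξ : Irrational ξ) (q : ℕ) (hq : IsConvergentDenom ξ q) :
    ∃ p : ℤ, IsCoprime p (q : ℤ) ∧ |ξ - (p : ℝ) / (q : ℝ)| ≤ 1 / (q : ℝ) ^ 2 := by
  obtain ⟨hq1, i, hden⟩ := hq
  have hnt : ∀ m, ¬ (GenContFract.of ξ).TerminatedAt m := by
    intro m hm
    have : (GenContFract.of ξ).Terminates := ⟨m, hm⟩
    rw [GenContFract.terminates_iff_rat] at this
    obtain ⟨r, hr⟩ := this
    exact hξ ⟨r, hr.symm⟩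
  obtain ⟨A, B, hA, hB⟩ := contsAux_int ξ (i+1)
  obtain ⟨A', B', hA', hB'⟩ := contsAux_int ξ (i+2)
  have hnums : (GenContFract.of ξ).nums i = (A : ℝ) := hA
  have hdens : (GenContFract.of ξ).dens i = (B : ℝ) := hB
  have hnums' : (GenContFract.of ξ).nums (i+1) = (A' : ℝ) := hA'
  have hdens' : (GenContFract.of ξ).dens (i+1) = (B' : ℝ) := hB'
  have hBq : (B : ℝ) = (q : ℝ) := by rw [← hdens, hden]
  have hdet := SimpContFract.determinant (s := ⟨_, GenContFract.of_isSimpContFract ξ⟩)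
    (n := i) (hnt i)
  rw [show ((⟨_, GenContFract.of_isSimpContFract ξ⟩ : SimpContFract ℝ) : GenContFract ℝ)
    = GenContFract.of ξ from rfl] at hdet
  rw [hnums, hdens, hnums', hdens'] at hdet
  have hdetZ : A * B' - B * A' = (-1) ^ (i+1) := by exact_mod_cast hdet
  have hcop : IsCoprime A B := by
    refine ⟨(-1)^(i+1) * B', -((-1)^(i+1) * A'), ?_⟩
    have hε : ((-1:ℤ))^(i+1) * (-1)^(i+1) = 1 := by rw [← mul_pow]; norm_num
    linear_combination ((-1:ℤ))^(i+1) * hdetZ + hε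
  have hq0 : (0:ℝ) < (q:ℝ) := by exact_mod_cast hq1
  have happrox := GenContFract.abs_sub_convs_le (v := ξ) (n := i) (hnt i)
  rw [GenContFract.conv_eq_num_div_den, hnums, hdens, hBq] at happrox
  have hmono : (GenContFract.of ξ).dens i ≤ (GenContFract.of ξ).dens (i+1) :=
    GenContFract.of_den_mono
  rw [hden] at hmono
  refine ⟨A, by rwa [show (q:ℤ) = B by exact_mod_cast hBq.symm], ?_⟩
  refine happrox.trans ?_
  have hd' : (0:ℝ) < (GenContFract.of ξ).dens (i+1) := lt_of_lt_of_le hq0 hmono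
  rw [div_le_div_iff₀ (mul_pos hq0 hd') (by positivity)]
  nlinarith [hmono, hq0]

lemma int_cast_hom_comp : (Rat.castHom ℝ).comp (Int.castRingHom ℚ) = Int.castRingHom ℝ :=
  RingHom.ext_int _ _

lemma factor_out (p : ℤ) (q : ℕ) (hq : 1 ≤ q) (hcop : IsCoprime p (q:ℤ)) (P : Polynomial ℤ)
    (hP : P ≠ 0) (hroot : (P.map (Int.castRingHom ℝ)).eval ((p:ℝ)/(q:ℝ)) = 0) :
    ∃ Q : Polynomial ℤ, P = (C (q:ℤ) * X - C p) * Q := by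
  have hq0 : (q:ℚ) ≠ 0 := by positivity
  set L : Polynomial ℤ := C (q:ℤ) * X - C p with hL
  set xq : ℚ := (p:ℚ)/(q:ℚ) with hxq
  have hcast : (((P.map (Int.castRingHom ℚ)).eval xq : ℚ) : ℝ)
      = (P.map (Int.castRingHom ℝ)).eval ((p:ℝ)/(q:ℝ)) := by
    rw [eval_map, eval_map]
    rw [show (((eval₂ (Int.castRingHom ℚ) xq P : ℚ)) : ℝ)
        = (Rat.castHom ℝ) (eval₂ (Int.castRingHom ℚ) xq P) from rfl]
    rw [Polynomial.hom_eval₂, int_cast_hom_comp]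
    congr 1
    rw [hxq]
    simp
  have hrootQ : (P.map (Int.castRingHom ℚ)).eval xq = 0 := by
    have := hcast.trans hroot
    exact_mod_cast this
  have hdvdQ : (X - C xq) ∣ P.map (Int.castRingHom ℚ) := (dvd_iff_isRoot).2 hrootQ
  have hqx : (q:ℚ) * xq = (p:ℚ) := by rw [hxq]; field_simp
  have hmapL : L.map (Int.castRingHom ℚ) = C (q:ℚ) * (X - C xq) := by
    rw [mul_sub, ← C_mul, hqx, hL, Polynomial.map_sub, Polynomial.map_mul, map_C, map_C, map_X]
    simp only [eq_intCast, Int.cast_natCast]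
  have hLdvd : L.map (Int.castRingHom ℚ) ∣ P.map (Int.castRingHom ℚ) := by
    obtain ⟨R, hR⟩ := hdvdQ
    refine ⟨C (q:ℚ)⁻¹ * R, ?_⟩
    rw [hR, hmapL, show C (q:ℚ) * (X - C xq) * (C (q:ℚ)⁻¹ * R)
      = (C (q:ℚ) * C (q:ℚ)⁻¹) * ((X - C xq) * R) from by ring, ← C_mul,
      mul_inv_cancel₀ hq0, C_1, one_mul]
  have hLprim : L.IsPrimitive := by
    intro r hr
    have h1 : r ∣ L.coeff 1 := (C_dvd_iff_dvd_coeff r L).1 hr 1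
    have h0 : r ∣ L.coeff 0 := (C_dvd_iff_dvd_coeff r L).1 hr 0
    have hc1 : L.coeff 1 = (q:ℤ) := by
      rw [hL, coeff_sub, coeff_C_mul, coeff_X_one, coeff_C]
      norm_num
    have hc0 : L.coeff 0 = -p := by
      rw [hL, coeff_sub, coeff_C_mul, coeff_X_zero, coeff_C]
      norm_num
    rw [hc1] at h1; rw [hc0] at h0
    exact hcop.isUnit_of_dvd' (dvd_neg.1 h0) h1
  have hcont : P.content ≠ 0 := by rwa [Ne, content_eq_zero_iff]
  have hcQ : ((P.content : ℚ)) ≠ 0 := by exact_mod_cast hcont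
  have hfac : P.map (Int.castRingHom ℚ)
      = C (P.content : ℚ) * P.primPart.map (Int.castRingHom ℚ) := by
    conv_lhs => rw [eq_C_content_mul_primPart P]
    simp [Polynomial.map_mul]
  have hdvdPrim : L.map (Int.castRingHom ℚ) ∣ P.primPart.map (Int.castRingHom ℚ) := by
    obtain ⟨R, hR⟩ := hLdvd
    refine ⟨C ((P.content : ℚ))⁻¹ * R, ?_⟩
    have hEq : C (P.content : ℚ) * P.primPart.map (Int.castRingHom ℚ)
        = L.map (Int.castRingHom ℚ) * R := by rw [← hfac, hR]
    calc P.primPart.map (Int.castRingHom ℚ)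
        = C ((P.content : ℚ))⁻¹ * (C (P.content : ℚ) * P.primPart.map (Int.castRingHom ℚ)) := by
          rw [← mul_assoc, ← C_mul, inv_mul_cancel₀ hcQ, C_1, one_mul]
      _ = C ((P.content : ℚ))⁻¹ * (L.map (Int.castRingHom ℚ) * R) := by rw [hEq]
      _ = L.map (Int.castRingHom ℚ) * (C ((P.content : ℚ))⁻¹ * R) := by ring
  have halg : (algebraMap ℤ ℚ) = Int.castRingHom ℚ := RingHom.ext_int _ _
  have : L ∣ P.primPart := by
    apply hLprim.dvd_of_fraction_map_dvd_fraction_map (K := ℚ)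
    rwa [halg]
  obtain ⟨R, hR⟩ := this.trans (primPart_dvd P)
  exact ⟨R, hR⟩

lemma key_ineq (n : ℕ) (hn : 1 ≤ n) :
    (n:ℝ) * ((1:ℝ) / ((2:ℝ) ^ (n ^ 2) * ((n + 1).factorial : ℝ)))
      ≤ (1:ℝ) / ((2:ℝ) ^ ((n-1) ^ 2) * (n.factorial : ℝ)) := by
  have hnat : n * (2 ^ ((n-1)^2) * n.factorial) ≤ 2 ^ (n^2) * (n+1).factorial := by
    calc n * (2 ^ ((n-1)^2) * n.factorial) = 2 ^ ((n-1)^2) * (n * n.factorial) := by ring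
      _ ≤ 2 ^ (n^2) * ((n+1) * n.factorial) := by
          apply Nat.mul_le_mul
          · exact Nat.pow_le_pow_right (by norm_num) (Nat.pow_le_pow_left (by omega) 2)
          · exact Nat.mul_le_mul_right _ (by omega)
      _ = 2 ^ (n^2) * (n+1).factorial := by rw [Nat.factorial_succ]
  have h1 : (0:ℝ) < (2:ℝ) ^ (n ^ 2) * ((n + 1).factorial : ℝ) := by positivity
  have h2 : (0:ℝ) < (2:ℝ) ^ ((n-1) ^ 2) * (n.factorial : ℝ) := by positivity
  rw [mul_div_assoc', mul_one, div_le_div_iff₀ h1 h2, one_mul]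
  calc (n:ℝ) * ((2:ℝ) ^ ((n-1) ^ 2) * (n.factorial : ℝ))
      = ((n * (2 ^ ((n-1)^2) * n.factorial) : ℕ) : ℝ) := by push_cast; ring
    _ ≤ ((2 ^ (n^2) * (n+1).factorial : ℕ) : ℝ) := by exact_mod_cast hnat
    _ = (2:ℝ) ^ (n ^ 2) * ((n + 1).factorial : ℝ) := by push_cast; ring

lemma key_ineq2 (n : ℕ) :
    ((n:ℝ) + 1) * ((1:ℝ) / ((2:ℝ) ^ (n ^ 2) * ((n + 1).factorial : ℝ))) ≤ 1 := by
  have hnat : (n+1) ≤ 2 ^ (n^2) * (n+1).factorial :=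
    le_trans (Nat.self_le_factorial (n+1)) (Nat.le_mul_of_pos_left _ (by positivity))
  have h1 : (0:ℝ) < (2:ℝ) ^ (n ^ 2) * ((n + 1).factorial : ℝ) := by positivity
  rw [mul_div_assoc', mul_one, div_le_one h1]
  calc ((n:ℝ) + 1) = (((n+1 : ℕ)) : ℝ) := by push_cast; ring
    _ ≤ ((2 ^ (n^2) * (n+1).factorial : ℕ) : ℝ) := by exact_mod_cast hnat
    _ = (2:ℝ) ^ (n ^ 2) * ((n + 1).factorial : ℝ) := by push_cast; ring

lemma first_min_aux (ξ : ℝ) (hξ : Irrational ξ) :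
    ∀ n : ℕ, ∀ P : Polynomial ℤ, P ≠ 0 → P.natDegree ≤ n → ∀ q : ℕ, IsConvergentDenom ξ q →
    ∃ k ≤ n, (1 : ℝ) / ((2 : ℝ) ^ (n ^ 2) * ((n + 1).factorial : ℝ)) ≤
      |divDerivZ ξ P k| * (q : ℝ) ^ ((n : ℝ) - 2 * k) := by
  intro n
  induction n using Nat.strong_induction_on with
  | _ n ih =>
  intro P hP hdeg q hq
  by_contra hcon
  push_neg at hcon
  obtain ⟨p, hcop, happrox⟩ := conv_facts ξ hξ q hq
  have hq1 : 1 ≤ q := hq.1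
  have hQ1 : (1:ℝ) ≤ (q:ℝ) := by exact_mod_cast hq1
  have hQ0 : (0:ℝ) < (q:ℝ) := lt_of_lt_of_le one_pos hQ1
  set c : ℝ := (1 : ℝ) / ((2 : ℝ) ^ (n ^ 2) * ((n + 1).factorial : ℝ)) with hc
  have hc0 : 0 < c := by rw [hc]; positivity
  set Pr : Polynomial ℝ := P.map (Int.castRingHom ℝ) with hPr
  set T : Polynomial ℝ := taylor ξ Pr with hT
  have hTk : ∀ k, |divDerivZ ξ P k| = |T.coeff k| := fun k => rfl
  simp only [hTk] at hcon
  have hrpow : ∀ k : ℕ, (q:ℝ) ^ ((n:ℝ) - 2*(k:ℝ)) = (q:ℝ)^n / (q:ℝ)^(2*k) := by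
    intro k
    rw [show (n:ℝ) - 2*(k:ℝ) = ((n:ℕ):ℝ) - ((2*k : ℕ):ℝ) by push_cast; ring,
      Real.rpow_sub hQ0, Real.rpow_natCast, Real.rpow_natCast]
  have hTbound : ∀ k, k ≤ n → |T.coeff k| < c * (q:ℝ)^(2*k) / (q:ℝ)^n := by
    intro k hk
    have hthis := hcon k hk
    rw [hrpow] at hthis
    have h2 : (0:ℝ) < (q:ℝ)^(2*k) := by positivity
    have hn2 : (0:ℝ) < (q:ℝ)^n := by positivity
    rw [lt_div_iff₀ hn2]
    calc |T.coeff k| * (q:ℝ)^n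
        = |T.coeff k| * ((q:ℝ)^n / (q:ℝ)^(2*k)) * (q:ℝ)^(2*k) := by field_simp
      _ < c * (q:ℝ)^(2*k) := mul_lt_mul_of_pos_right hthis h2
  have hdegT : T.natDegree ≤ n := by
    rw [hT, natDegree_taylor]
    exact le_trans natDegree_map_le hdeg
  have heval : ∀ x : ℝ, Pr.eval x = ∑ k ∈ Finset.range (n+1), T.coeff k * (x - ξ)^k := by
    intro x
    rw [← taylor_eval_sub ξ Pr x, ← hT,
      Polynomial.eval_eq_sum_range' (lt_of_le_of_lt hdegT (Nat.lt_succ_self n))]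
  by_cases hroot : Pr.eval ((p:ℝ)/(q:ℝ)) = 0
  · -- root case: factor out (qX - p)
    obtain ⟨Q₀, hfac⟩ := factor_out p q hq1 hcop P hP (by rwa [← hPr])
    have hQ₀ : Q₀ ≠ 0 := by
      rintro rfl
      rw [mul_zero] at hfac
      exact hP hfac
    have hqZ : (q:ℤ) ≠ 0 := by exact_mod_cast (by omega : q ≠ 0)
    have hL0 : (C (q:ℤ) * X - C p) ≠ 0 := by
      intro h
      have h1 := congrArg (fun f => Polynomial.coeff f 1) h
      simp only [coeff_sub, coeff_C_mul, coeff_X_one, coeff_C, mul_one, coeff_zero] at h1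
      norm_num at h1
      omega
    have hdegL : (C (q:ℤ) * X - C p).natDegree = 1 := by
      rw [show C (q:ℤ) * X - C p = C (q:ℤ) * X + C (-p) by rw [C_neg]; ring]
      exact natDegree_linear hqZ
    have hdegP : P.natDegree = 1 + Q₀.natDegree := by
      rw [hfac, natDegree_mul hL0 hQ₀, hdegL]
    have hn1 : 1 ≤ n := by omega
    have hdegQ₀ : Q₀.natDegree ≤ n - 1 := by omega
    obtain ⟨j, hjle, hjbound⟩ := ih (n-1) (by omega) Q₀ hQ₀ hdegQ₀ q hq
    rw [show (n-1)+1 = n from by omega] at hjbound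
    set S : Polynomial ℝ := taylor ξ (Q₀.map (Int.castRingHom ℝ)) with hS
    have hjS : |divDerivZ ξ Q₀ j| = |S.coeff j| := rfl
    rw [hjS] at hjbound
    set u : ℝ := (q:ℝ) * ξ - (p:ℝ) with hu
    have hu_abs : |u| ≤ 1/(q:ℝ) := by
      have h1 : u = (q:ℝ) * (ξ - (p:ℝ)/(q:ℝ)) := by
        rw [hu, mul_sub, ← mul_div_assoc, mul_div_cancel_left₀ _ (ne_of_gt hQ0)]
      rw [h1, abs_mul, abs_of_pos hQ0]
      calc (q:ℝ) * |ξ - (p:ℝ)/(q:ℝ)| ≤ (q:ℝ) * (1/(q:ℝ)^2) :=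
            mul_le_mul_of_nonneg_left happrox hQ0.le
        _ = 1/(q:ℝ) := by field_simp [pow_two]
    have hTS : T = (C u + C (q:ℝ) * X) * S := by
      rw [hT, hPr, hfac, Polynomial.map_mul, taylor_mul]
      congr 1
      rw [Polynomial.map_sub, Polynomial.map_mul, map_C, map_C, map_X]
      simp only [taylor_apply, sub_comp, mul_comp, C_comp, X_comp]
      rw [hu]
      simp only [eq_intCast, Int.cast_natCast]
      rw [C_sub, C_mul]
      push_cast
      ring
    have hrec : ∀ m : ℕ, T.coeff (m+1) = u * S.coeff (m+1) + (q:ℝ) * S.coeff m := by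
      intro m
      rw [hTS, add_mul, coeff_add, coeff_C_mul, mul_assoc, coeff_C_mul, coeff_X_mul]
    have hSn : ∀ m, n ≤ m → S.coeff m = 0 := by
      intro m hm
      apply coeff_eq_zero_of_natDegree_lt
      rw [hS, natDegree_taylor]
      exact lt_of_le_of_lt (le_trans natDegree_map_le hdegQ₀) (by omega)
    have claim : ∀ m : ℕ, ∀ jj : ℕ, jj + m = n →
        |S.coeff jj| ≤ ∑ k ∈ Finset.Ioc jj n, |T.coeff k| * (q:ℝ)^(2*jj+1) / (q:ℝ)^(2*k) := by
      intro m
      induction m with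
      | zero =>
        intro jj hjj
        rw [hSn jj (by omega), show jj = n from by omega]
        simp
      | succ m ihm =>
        intro jj hjj
        have hjlt : jj < n := by omega
        have hstep := hrec jj
        have hSjj : S.coeff jj = (T.coeff (jj+1) - u * S.coeff (jj+1)) / (q:ℝ) := by
          rw [hstep]; field_simp; ring
        have htri : |T.coeff (jj+1) - u * S.coeff (jj+1)|
            ≤ |T.coeff (jj+1)| + |u| * |S.coeff (jj+1)| := by
          calc |T.coeff (jj+1) - u * S.coeff (jj+1)|
              = |T.coeff (jj+1) + (-(u * S.coeff (jj+1)))| := by rw [sub_eq_add_neg]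
            _ ≤ |T.coeff (jj+1)| + |(-(u * S.coeff (jj+1)))| := abs_add_le _ _
            _ = |T.coeff (jj+1)| + |u| * |S.coeff (jj+1)| := by rw [abs_neg, abs_mul]
        have h1 : |S.coeff jj| ≤ |T.coeff (jj+1)|/(q:ℝ) + |S.coeff (jj+1)|/(q:ℝ)^2 := by
          rw [hSjj, abs_div, abs_of_pos hQ0]
          calc |T.coeff (jj+1) - u * S.coeff (jj+1)| / (q:ℝ)
              ≤ (|T.coeff (jj+1)| + |u| * |S.coeff (jj+1)|) / (q:ℝ) :=
                (div_le_div_iff_of_pos_right hQ0).2 htri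
            _ ≤ (|T.coeff (jj+1)| + (1/(q:ℝ)) * |S.coeff (jj+1)|) / (q:ℝ) := by
                apply (div_le_div_iff_of_pos_right hQ0).2
                have := mul_le_mul_of_nonneg_right hu_abs (abs_nonneg (S.coeff (jj+1)))
                linarith
            _ = |T.coeff (jj+1)|/(q:ℝ) + |S.coeff (jj+1)|/(q:ℝ)^2 := by
                field_simp
        have h2 := ihm (jj+1) (by omega)
        have hIoc : Finset.Ioc jj n = insert (jj+1) (Finset.Ioc (jj+1) n) := by
          ext x
          simp only [Finset.mem_Ioc, Finset.mem_insert]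
          omega
        rw [hIoc, Finset.sum_insert (by simp)]
        have e1 : |T.coeff (jj+1)| * (q:ℝ)^(2*jj+1) / (q:ℝ)^(2*(jj+1))
            = |T.coeff (jj+1)|/(q:ℝ) := by
          rw [show 2*(jj+1) = (2*jj+1)+1 from by ring, pow_succ]
          field_simp
          ring
        have e2 : ∑ k ∈ Finset.Ioc (jj+1) n, |T.coeff k| * (q:ℝ)^(2*jj+1) / (q:ℝ)^(2*k)
            = (∑ k ∈ Finset.Ioc (jj+1) n, |T.coeff k| * (q:ℝ)^(2*(jj+1)+1) / (q:ℝ)^(2*k))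
              / (q:ℝ)^2 := by
          rw [Finset.sum_div]
          apply Finset.sum_congr rfl
          intro k hk
          rw [show 2*(jj+1)+1 = (2*jj+1)+2 from by ring, pow_add]
          have hqk : (0:ℝ) < (q:ℝ)^(2*k) := by positivity
          field_simp
          ring
        calc |S.coeff jj| ≤ |T.coeff (jj+1)|/(q:ℝ) + |S.coeff (jj+1)|/(q:ℝ)^2 := h1
          _ ≤ |T.coeff (jj+1)|/(q:ℝ)
              + (∑ k ∈ Finset.Ioc (jj+1) n, |T.coeff k| * (q:ℝ)^(2*(jj+1)+1) / (q:ℝ)^(2*k))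
                /(q:ℝ)^2 := by
              have := (div_le_div_iff_of_pos_right (show (0:ℝ) < (q:ℝ)^2 by positivity)).2 h2
              linarith
          _ = |T.coeff (jj+1)| * (q:ℝ)^(2*jj+1) / (q:ℝ)^(2*(jj+1))
              + ∑ k ∈ Finset.Ioc (jj+1) n, |T.coeff k| * (q:ℝ)^(2*jj+1) / (q:ℝ)^(2*k) := by
              rw [e1, e2]
    have hjn : j < n := by omega
    have hclaim := claim (n - j) j (by omega)
    have hsum_lt : ∑ k ∈ Finset.Ioc j n, |T.coeff k| * (q:ℝ)^(2*j+1) / (q:ℝ)^(2*k)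
        < ∑ k ∈ Finset.Ioc j n, c * (q:ℝ)^(2*j+1) / (q:ℝ)^n := by
      apply Finset.sum_lt_sum_of_nonempty (Finset.nonempty_Ioc.2 hjn)
      intro k hk
      have hk2 := Finset.mem_Ioc.1 hk
      have hb := hTbound k hk2.2
      calc |T.coeff k| * (q:ℝ)^(2*j+1) / (q:ℝ)^(2*k)
          < (c * (q:ℝ)^(2*k)/(q:ℝ)^n) * (q:ℝ)^(2*j+1) / (q:ℝ)^(2*k) := by
            exact (div_lt_div_iff_of_pos_right (by positivity)).2
              (mul_lt_mul_of_pos_right hb (by positivity))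
        _ = c * (q:ℝ)^(2*j+1)/(q:ℝ)^n := by
            have hqk : (0:ℝ) < (q:ℝ)^(2*k) := by positivity
            field_simp
    have hsum_const : ∑ k ∈ Finset.Ioc j n, c * (q:ℝ)^(2*j+1) / (q:ℝ)^n
        = ((n - j : ℕ) : ℝ) * (c * (q:ℝ)^(2*j+1) / (q:ℝ)^n) := by
      rw [Finset.sum_const, Nat.card_Ioc, nsmul_eq_mul]
    have hrpow' : (q:ℝ) ^ (((n-1:ℕ):ℝ) - 2*(j:ℝ)) = (q:ℝ)^(n-1) / (q:ℝ)^(2*j) := by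
      rw [show ((n-1:ℕ):ℝ) - 2*(j:ℝ) = ((n-1:ℕ):ℝ) - ((2*j : ℕ):ℝ) by push_cast; ring,
        Real.rpow_sub hQ0, Real.rpow_natCast, Real.rpow_natCast]
    rw [hrpow'] at hjbound
    have final : (1:ℝ) / ((2:ℝ) ^ ((n-1) ^ 2) * (n.factorial : ℝ)) < (n:ℝ) * c := by
      calc (1:ℝ) / ((2:ℝ) ^ ((n-1) ^ 2) * (n.factorial : ℝ))
          ≤ |S.coeff j| * ((q:ℝ)^(n-1)/(q:ℝ)^(2*j)) := hjbound
        _ ≤ (∑ k ∈ Finset.Ioc j n, |T.coeff k| * (q:ℝ)^(2*j+1) / (q:ℝ)^(2*k))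
            * ((q:ℝ)^(n-1)/(q:ℝ)^(2*j)) :=
            mul_le_mul_of_nonneg_right hclaim (by positivity)
        _ < (((n - j : ℕ) : ℝ) * (c * (q:ℝ)^(2*j+1)/(q:ℝ)^n)) * ((q:ℝ)^(n-1)/(q:ℝ)^(2*j)) :=
            mul_lt_mul_of_pos_right (hsum_lt.trans_eq hsum_const) (by positivity)
        _ ≤ ((n:ℝ) * (c * (q:ℝ)^(2*j+1)/(q:ℝ)^n)) * ((q:ℝ)^(n-1)/(q:ℝ)^(2*j)) := by
            apply mul_le_mul_of_nonneg_right _ (by positivity)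
            apply mul_le_mul_of_nonneg_right _ (by positivity)
            exact_mod_cast Nat.cast_le.2 (Nat.sub_le n j)
        _ = (n:ℝ) * c := by
            have hpow : (q:ℝ)^(2*j+1) * (q:ℝ)^(n-1) = (q:ℝ)^n * (q:ℝ)^(2*j) := by
              rw [← pow_add, ← pow_add]
              congr 1
              omega
            rw [show ((n:ℝ) * (c * (q:ℝ)^(2*j+1)/(q:ℝ)^n)) * ((q:ℝ)^(n-1)/(q:ℝ)^(2*j))
                = (n:ℝ)*c * (((q:ℝ)^(2*j+1) * (q:ℝ)^(n-1))/((q:ℝ)^n * (q:ℝ)^(2*j))) from by ring,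
              hpow, div_self (by positivity), mul_one]
    have hkey := key_ineq n hn1
    rw [← hc] at hkey
    exact absurd final (not_lt.2 hkey)
  · -- non-root case
    set z : ℤ := ∑ k ∈ Finset.range (n+1), P.coeff k * p^k * (q:ℤ)^(n-k) with hz
    have hzval : (z:ℝ) = (q:ℝ)^n * Pr.eval ((p:ℝ)/(q:ℝ)) := by
      have hev : Pr.eval ((p:ℝ)/(q:ℝ))
          = ∑ k ∈ Finset.range (n+1), ((P.coeff k : ℝ)) * ((p:ℝ)/(q:ℝ))^k := by
        rw [Polynomial.eval_eq_sum_range'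
          (lt_of_le_of_lt (le_trans natDegree_map_le hdeg) (Nat.lt_succ_self n))]
        apply Finset.sum_congr rfl
        intro k _
        rw [coeff_map]
        simp
      rw [hev, Finset.mul_sum, hz]
      push_cast
      apply Finset.sum_congr rfl
      intro k hk
      have hkn : k ≤ n := Nat.lt_succ_iff.1 (Finset.mem_range.1 hk)
      rw [div_pow]
      rw [show (q:ℝ)^n = (q:ℝ)^(n-k) * (q:ℝ)^k from by rw [← pow_add]; congr 1; omega]
      have hqk : ((q:ℝ))^k ≠ 0 := by positivity
      field_simp
    have hz0 : z ≠ 0 := by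
      intro h
      apply hroot
      have h0 : (0:ℝ) = (q:ℝ)^n * Pr.eval ((p:ℝ)/(q:ℝ)) := by
        rw [← hzval, h, Int.cast_zero]
      have := mul_eq_zero.1 h0.symm
      rcases this with h' | h'
      · exact absurd h' (by positivity)
      · exact h'
    have hz1 : (1:ℝ) ≤ |(z:ℝ)| := by
      have := Int.one_le_abs hz0
      exact_mod_cast this
    have hlow : 1/(q:ℝ)^n ≤ |Pr.eval ((p:ℝ)/(q:ℝ))| := by
      rw [div_le_iff₀ (by positivity)]
      have habs : |(z:ℝ)| = (q:ℝ)^n * |Pr.eval ((p:ℝ)/(q:ℝ))| := by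
        rw [hzval, abs_mul, abs_of_pos (by positivity)]
      nlinarith [hz1, habs]
    have hup : |Pr.eval ((p:ℝ)/(q:ℝ))|
        ≤ ∑ k ∈ Finset.range (n+1), |T.coeff k| / (q:ℝ)^(2*k) := by
      rw [heval]
      refine (Finset.abs_sum_le_sum_abs _ _).trans ?_
      apply Finset.sum_le_sum
      intro k hk
      rw [abs_mul]
      have h1 : |(p:ℝ)/(q:ℝ) - ξ|^k ≤ (1/(q:ℝ)^2)^k := by
        apply pow_le_pow_left₀ (abs_nonneg _)
        rw [abs_sub_comm]
        exact happrox
      calc |T.coeff k| * |((p:ℝ)/(q:ℝ) - ξ)^k|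
          = |T.coeff k| * |(p:ℝ)/(q:ℝ) - ξ|^k := by rw [abs_pow]
        _ ≤ |T.coeff k| * (1/(q:ℝ)^2)^k := mul_le_mul_of_nonneg_left h1 (abs_nonneg _)
        _ = |T.coeff k| / (q:ℝ)^(2*k) := by
            rw [div_pow, one_pow, pow_mul]
            ring
    have hsum_up : ∑ k ∈ Finset.range (n+1), |T.coeff k| / (q:ℝ)^(2*k)
        < ∑ k ∈ Finset.range (n+1), c / (q:ℝ)^n := by
      apply Finset.sum_lt_sum_of_nonempty (by simp)
      intro k hk
      have hb := hTbound k (Nat.lt_succ_iff.1 (Finset.mem_range.1 hk))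
      calc |T.coeff k| / (q:ℝ)^(2*k)
          < (c * (q:ℝ)^(2*k)/(q:ℝ)^n) / (q:ℝ)^(2*k) :=
            (div_lt_div_iff_of_pos_right (by positivity)).2 hb
        _ = c / (q:ℝ)^n := by
            have hqk : (0:ℝ) < (q:ℝ)^(2*k) := by positivity
            field_simp
    have hconst : ∑ k ∈ Finset.range (n+1), c / (q:ℝ)^n = ((n+1:ℕ):ℝ) * (c/(q:ℝ)^n) := by
      rw [Finset.sum_const, Finset.card_range, nsmul_eq_mul]
    have hnc := key_ineq2 n
    rw [← hc] at hnc
    have hcontr : (1:ℝ)/(q:ℝ)^n < (1:ℝ)/(q:ℝ)^n := by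
      calc (1:ℝ)/(q:ℝ)^n ≤ |Pr.eval ((p:ℝ)/(q:ℝ))| := hlow
        _ ≤ ∑ k ∈ Finset.range (n+1), |T.coeff k| / (q:ℝ)^(2*k) := hup
        _ < ((n+1:ℕ):ℝ) * (c/(q:ℝ)^n) := hsum_up.trans_eq hconst
        _ ≤ 1/(q:ℝ)^n := by
            rw [show ((n+1:ℕ):ℝ) * (c/(q:ℝ)^n) = (((n:ℝ)+1)*c)/(q:ℝ)^n from by push_cast; ring]
            exact (div_le_div_iff_of_pos_right (by positivity)).2 hnc
    exact absurd hcontr (lt_irrefl _)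

/-- First-minimum lower bound: if `q ≥ 1` is the denominator of a convergent of the irrational
number `ξ`, then every nonzero integer polynomial `P` of degree at most `n` satisfies
`max_{0 ≤ k ≤ n} |P^{[k]}(ξ)| q^(n-2k) ≥ (2^(n²) (n+1)!)⁻¹`. -/
theorem first_minimum_lower_bound
    (ξ : ℝ) (hξ : Irrational ξ) (n : ℕ) (hn : 0 < n) (q : ℕ)
    (hq : IsConvergentDenom ξ q) (P : Polynomial ℤ) (hP : P ≠ 0) (hdeg : P.natDegree ≤ n) :
    ∃ k ≤ n, (1 : ℝ) / ((2 : ℝ) ^ (n ^ 2) * ((n + 1).factorial : ℝ)) ≤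
      |divDerivZ ξ P k| * (q : ℝ) ^ ((n : ℝ) - 2 * k) := by
  exact first_min_aux ξ hξ n P hP hdeg q hq
end

section
/- Let ξ be an irrational real number, let n be a positive integer, let q ≥ 1 be the denominator of a convergent of the continued fraction expansion of ξ, and set c₅ = (n+1)·2^{n+1}. Then there exists a polynomial P ∈ ℤ[T] of degree n that is irreducible over ℚ and satisfies c₅ q^{2k−n} ≤ |P^{[k]}(ξ)| ≤ 3 c₅ q^{2k−n} for all 0 ≤ k ≤ n. -/
open Polynomial

namespace ExistsIrredAux

open Polynomial Finset


lemma choose_le_two_pow (n k : ℕ) : (n.choose k) ≤ 2 ^ n := by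
  rcases le_or_gt k n with h | h
  · calc n.choose k ≤ ∑ m ∈ range (n+1), n.choose m :=
        Finset.single_le_sum (fun _ _ => Nat.zero_le _) (by simp [Nat.lt_succ_iff, h])
    _ = 2 ^ n := Nat.sum_range_choose n
  · simp [Nat.choose_eq_zero_of_lt h]

lemma coeff_linear_pow (A B : ℝ) (m k : ℕ) :
    ((C A * X + C B) ^ m).coeff k = (m.choose k : ℝ) * A ^ k * B ^ (m - k) := by
  have h : ∀ i ∈ range (m+1),
      ((C A * X) ^ i * (C B) ^ (m - i) * ((m.choose i : ℕ) : ℝ[X])).coeff k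
        = if k = i then (m.choose i : ℝ) * A ^ i * B ^ (m - i) else 0 := by
    intro i _
    have hterm : (C A * X) ^ i * (C B) ^ (m - i) * ((m.choose i : ℕ) : ℝ[X])
        = C ((m.choose i : ℝ) * A ^ i * B ^ (m - i)) * X ^ i := by
      rw [mul_pow, ← C_pow, ← C_pow, ← C_eq_natCast, C_mul, C_mul]
      ring
    rw [hterm, coeff_C_mul, coeff_X_pow]
    by_cases hik : k = i <;> simp [hik]
  rw [add_pow, finset_sum_coeff, Finset.sum_congr rfl h, Finset.sum_ite_eq (range (m+1)) k]
  by_cases hk : k ∈ range (m+1)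
  · simp [hk]
  · have hkm : m < k := by simpa [Nat.lt_succ_iff, not_le] using hk
    simp [hk, Nat.choose_eq_zero_of_lt hkm]

lemma term_bound {qr q' u u' : ℝ} (hq1 : 1 ≤ qr) (hq'0 : 0 ≤ q') (hq'q : q' ≤ qr)
    (hu : |u| * qr ≤ 1) (hu' : |u'| * qr ≤ 1) {n j : ℕ} (hjn : j ≤ n) (a b : ℕ) :
    (j.choose a : ℝ) * qr ^ a * |u| ^ (j - a) *
      (((n - j).choose b : ℝ) * q' ^ b * |u'| ^ (n - j - b)) * qr ^ n
      ≤ (j.choose a : ℝ) * ((n - j).choose b : ℝ) * qr ^ (2 * (a + b)) := by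
  have hq0 : (0:ℝ) ≤ qr := le_trans zero_le_one hq1
  have hu0 : (0:ℝ) ≤ |u| := abs_nonneg u
  have hu'0 : (0:ℝ) ≤ |u'| := abs_nonneg u'
  rcases le_or_gt a j with haj | haj
  swap
  · simp [Nat.choose_eq_zero_of_lt haj]
  rcases le_or_gt b (n - j) with hbj | hbj
  swap
  · simp [Nat.choose_eq_zero_of_lt hbj]
  have hsplit : qr ^ n = qr ^ (j - a) * qr ^ (n - j - b) * qr ^ (a + b) := by
    rw [← pow_add, ← pow_add]
    congr 1
    omega
  rw [hsplit]
  have key : (j.choose a : ℝ) * qr ^ a * |u| ^ (j - a) *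
      (((n - j).choose b : ℝ) * q' ^ b * |u'| ^ (n - j - b)) *
      (qr ^ (j - a) * qr ^ (n - j - b) * qr ^ (a + b))
      = (j.choose a : ℝ) * ((n - j).choose b : ℝ) *
        ((|u| * qr) ^ (j - a) * ((|u'| * qr) ^ (n - j - b) *
          (q' ^ b * (qr ^ a * qr ^ (a + b))))) := by
    rw [mul_pow, mul_pow]; ring
  rw [key]
  have h1 : (|u| * qr) ^ (j - a) ≤ 1 := pow_le_one₀ (by positivity) hu
  have h2 : (|u'| * qr) ^ (n - j - b) ≤ 1 := pow_le_one₀ (by positivity) hu'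
  have h3 : q' ^ b ≤ qr ^ b := pow_le_pow_left₀ hq'0 hq'q b
  calc (j.choose a : ℝ) * ((n - j).choose b : ℝ) *
        ((|u| * qr) ^ (j - a) * ((|u'| * qr) ^ (n - j - b) *
          (q' ^ b * (qr ^ a * qr ^ (a + b)))))
      ≤ (j.choose a : ℝ) * ((n - j).choose b : ℝ) *
        (1 * (1 * (qr ^ b * (qr ^ a * qr ^ (a + b))))) := by
        gcongr <;> positivity
    _ = (j.choose a : ℝ) * ((n - j).choose b : ℝ) * qr ^ (2 * (a + b)) := by
        rw [← pow_add, ← pow_add]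
        ring_nf

lemma key_bound {qr q' u u' : ℝ} (hq1 : 1 ≤ qr) (hq'0 : 0 ≤ q') (hq'q : q' ≤ qr)
    (hu : |u| * qr ≤ 1) (hu' : |u'| * qr ≤ 1) (n j k : ℕ) (hjn : j ≤ n) :
    |(((C qr * X + C u) ^ j * (C q' * X + C u') ^ (n - j)).coeff k)| * qr ^ n
      ≤ (n.choose k : ℝ) * qr ^ (2 * k) := by
  have hq0 : (0:ℝ) ≤ qr := le_trans zero_le_one hq1
  have habs : |(((C qr * X + C u) ^ j * (C q' * X + C u') ^ (n - j)).coeff k)|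
      ≤ ∑ ab ∈ Finset.HasAntidiagonal.antidiagonal k,
          (j.choose ab.1 : ℝ) * qr ^ ab.1 * |u| ^ (j - ab.1) *
            (((n - j).choose ab.2 : ℝ) * q' ^ ab.2 * |u'| ^ (n - j - ab.2)) := by
    rw [coeff_mul]
    refine (Finset.abs_sum_le_sum_abs _ _).trans (Finset.sum_le_sum ?_)
    intro ab _
    rw [coeff_linear_pow, coeff_linear_pow]
    have hrw : ∀ (c : ℕ) (x y : ℝ) (e f : ℕ),
        |(c:ℝ) * x ^ e * y ^ f| = (c:ℝ) * |x| ^ e * |y| ^ f := by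
      intro c x y e f
      rw [abs_mul, abs_mul, abs_pow, abs_pow, Nat.abs_cast]
    rw [abs_mul, hrw, hrw, abs_of_nonneg hq0, abs_of_nonneg hq'0]
  refine le_trans (mul_le_mul_of_nonneg_right habs (by positivity)) ?_
  rw [Finset.sum_mul]
  have hterm : ∀ ab ∈ Finset.HasAntidiagonal.antidiagonal k,
      (j.choose ab.1 : ℝ) * qr ^ ab.1 * |u| ^ (j - ab.1) *
          (((n - j).choose ab.2 : ℝ) * q' ^ ab.2 * |u'| ^ (n - j - ab.2)) * qr ^ n
        ≤ (j.choose ab.1 : ℝ) * ((n - j).choose ab.2 : ℝ) * qr ^ (2 * k) := by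
    intro ab hab
    have hab' : ab.1 + ab.2 = k := Finset.HasAntidiagonal.mem_antidiagonal.mp hab
    have := term_bound hq1 hq'0 hq'q hu hu' hjn ab.1 ab.2
    rwa [hab'] at this
  refine le_trans (Finset.sum_le_sum hterm) ?_
  rw [← Finset.sum_mul]
  have hv : ((n.choose k : ℕ) : ℝ)
      = ∑ ab ∈ Finset.HasAntidiagonal.antidiagonal k, (j.choose ab.1 : ℝ) * ((n - j).choose ab.2 : ℝ) := by
    rw_mod_cast [← Nat.add_choose_eq]
    rw [Nat.add_sub_cancel' hjn]
  rw [← hv]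



lemma span_mem {pr p'r qr q'r : ℝ} (hD : qr * p'r - q'r * pr ≠ 0) (n m : ℕ) (hm : m ≤ n) :
    (X : ℝ[X]) ^ m ∈ Submodule.span ℝ (Set.range fun j : Fin (n+1) =>
      (C qr * X - C pr) ^ (j:ℕ) * (C q'r * X - C p'r) ^ (n - (j:ℕ))) := by
  set L := C qr * X - C pr with hL
  set L' := C q'r * X - C p'r with hL'
  set W := Submodule.span ℝ (Set.range fun j : Fin (n+1) => L ^ (j:ℕ) * L' ^ (n - (j:ℕ))) with hW
  set D := qr * p'r - q'r * pr with hDdef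
  have hbase : ∀ a : ℕ, a ≤ n → L ^ a * L' ^ (n - a) ∈ W := by
    intro a ha
    exact Submodule.subset_span ⟨⟨a, Nat.lt_succ_of_le ha⟩, rfl⟩
  have key : (C p'r * L + C (-pr) * L') ^ m * (C q'r * L + C (-qr) * L') ^ (n - m) ∈ W := by
    rw [add_pow, add_pow, Finset.sum_mul_sum]
    refine Submodule.sum_mem _ fun i hi => Submodule.sum_mem _ fun l hl => ?_
    simp only [Finset.mem_range, Nat.lt_succ_iff] at hi hl
    have hterm : (C p'r * L) ^ i * (C (-pr) * L') ^ (m - i) * ((m.choose i : ℕ) : ℝ[X]) *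
        ((C q'r * L) ^ l * (C (-qr) * L') ^ (n - m - l) * (((n - m).choose l : ℕ) : ℝ[X]))
        = (p'r ^ i * (-pr) ^ (m - i) * (m.choose i : ℝ) * q'r ^ l * (-qr) ^ (n - m - l)
            * ((n - m).choose l : ℝ)) • (L ^ (i + l) * L' ^ (n - (i + l))) := by
      have hexp : (n - (i + l)) = (m - i) + (n - m - l) := by omega
      rw [smul_eq_C_mul, hexp, pow_add, pow_add]
      rw [mul_pow, mul_pow, mul_pow, mul_pow, ← C_pow, ← C_pow, ← C_pow, ← C_pow,
        ← C_eq_natCast, ← C_eq_natCast, C_mul, C_mul, C_mul, C_mul, C_mul]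
      ring
    rw [hterm]
    exact Submodule.smul_mem _ _ (hbase (i + l) (by omega))
  have h1 : C p'r * L + C (-pr) * L' = C D * X := by
    rw [hL, hL', hDdef, C_neg, C_sub, C_mul, C_mul]
    ring
  have h2 : C q'r * L + C (-qr) * L' = C D := by
    rw [hL, hL', hDdef, C_neg, C_sub, C_mul, C_mul]
    ring
  rw [h1, h2] at key
  have h3 : (C D * X) ^ m * (C D) ^ (n - m) = C (D ^ n) * X ^ m := by
    rw [mul_pow, ← C_pow, ← C_pow]
    rw [show C (D ^ m) * X ^ m * C (D ^ (n-m)) = C (D ^ m) * C (D ^ (n-m)) * X ^ m from by ring,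
      ← C_mul, ← pow_add, Nat.add_sub_cancel' hm]
  rw [h3, ← smul_eq_C_mul] at key
  have := Submodule.smul_mem W ((D ^ n)⁻¹) key
  rwa [smul_smul, inv_mul_cancel₀ (pow_ne_zero _ hD), one_smul] at this

lemma xsub_pow_mem {pr p'r qr q'r : ℝ} (ξ : ℝ) (hD : qr * p'r - q'r * pr ≠ 0) (n m : ℕ)
    (hm : m ≤ n) :
    ((X : ℝ[X]) - C ξ) ^ m ∈ Submodule.span ℝ (Set.range fun j : Fin (n+1) =>
      (C qr * X - C pr) ^ (j:ℕ) * (C q'r * X - C p'r) ^ (n - (j:ℕ))) := by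
  have hexp : ((X : ℝ[X]) - C ξ) ^ m
      = ∑ i ∈ range (m+1), ((m.choose i : ℝ) * (-ξ) ^ (m - i)) • (X : ℝ[X]) ^ i := by
    rw [sub_eq_add_neg, ← C_neg, (commute_X (C (-ξ) : ℝ[X])).add_pow]
    refine Finset.sum_congr rfl fun i _ => ?_
    rw [smul_eq_C_mul, ← C_pow, ← C_eq_natCast, C_mul]
    ring
  rw [hexp]
  refine Submodule.sum_mem _ fun i hi => Submodule.smul_mem _ _ ?_
  exact span_mem hD n i (by simp only [Finset.mem_range, Nat.lt_succ_iff] at hi; omega)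

/-- The continuants of `GenContFract.of v` are integers. -/
lemma contsAux_int (v : ℝ) (hnt : ∀ m, ¬(GenContFract.of v).TerminatedAt m) (n : ℕ) :
    (∃ a : ℤ, ((GenContFract.of v).contsAux n).a = (a:ℝ)) ∧
    (∃ b : ℤ, ((GenContFract.of v).contsAux n).b = (b:ℝ)) := by
  induction n using Nat.strong_induction_on with
  | _ n ih =>
  match n with
  | 0 =>
    rw [GenContFract.zeroth_contAux_eq_one_zero]
    exact ⟨⟨1, by norm_num⟩, ⟨0, by norm_num⟩⟩
  | 1 =>
    rw [GenContFract.first_contAux_eq_h_one]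
    exact ⟨⟨⌊v⌋, by rw [GenContFract.of_h_eq_floor]⟩, ⟨1, by norm_num⟩⟩
  | (n+2) =>
    obtain ⟨gp, hs⟩ : ∃ gp, (GenContFract.of v).s.get? n = some gp :=
      Option.ne_none_iff_exists'.1 (hnt n)
    have recur := GenContFract.contsAux_recurrence hs rfl rfl
    obtain ⟨ha1, ⟨z, hz⟩⟩ := GenContFract.of_partNum_eq_one_and_exists_int_partDen_eq hs
    obtain ⟨⟨a1, ha1'⟩, ⟨b1, hb1'⟩⟩ := ih n (by omega)
    obtain ⟨⟨a2, ha2'⟩, ⟨b2, hb2'⟩⟩ := ih (n+1) (by omega)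
    rw [recur]
    constructor
    · refine ⟨z * a2 + a1, ?_⟩
      simp only [hz, ha1, ha2', ha1']
      push_cast
      ring
    · refine ⟨z * b2 + b1, ?_⟩
      simp only [hz, ha1, hb2', hb1']
      push_cast
      ring

end ExistsIrredAux

open Polynomial Finset

namespace ExistsIrredAux

lemma exists_good_pair (ξ : ℝ) (hξ : Irrational ξ) (q : ℕ) (hq1 : 1 ≤ q)
    (i : ℕ) (hi : (GenContFract.of ξ).dens i = (q : ℝ)) :
    ∃ p p' q' : ℤ, 0 ≤ q' ∧ (q' : ℝ) ≤ (q : ℝ) ∧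
      |(q:ℝ) * ξ - (p:ℝ)| * q ≤ 1 ∧ |(q':ℝ) * ξ - (p':ℝ)| * q ≤ 1 ∧
      (q:ℤ) * p' - q' * p ≠ 0 := by
  have hnt : ∀ m, ¬(GenContFract.of ξ).TerminatedAt m := by
    intro m hm
    have hterm : (GenContFract.of ξ).Terminates := ⟨m, hm⟩
    rw [GenContFract.terminates_iff_rat] at hterm
    obtain ⟨r, hr⟩ := hterm
    exact hξ ⟨r, hr.symm⟩
  have hq0 : (0:ℝ) < (q:ℝ) := by exact_mod_cast Nat.lt_of_lt_of_le Nat.zero_lt_one hq1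
  -- numerator at i
  obtain ⟨p, hp⟩ := (contsAux_int ξ hnt (i+1)).1
  have hpnum : (GenContFract.of ξ).nums i = (p:ℝ) := by
    rwa [GenContFract.num_eq_conts_a, GenContFract.nth_cont_eq_succ_nth_contAux]
  have hqden : (GenContFract.of ξ).dens i = (q:ℝ) := hi
  -- the denominator at i+1 is at least q
  have hdenssucc : (q:ℝ) ≤ (GenContFract.of ξ).dens (i+1) := by
    rw [← hqden]; exact GenContFract.of_den_mono
  have hd1pos : (0:ℝ) < (GenContFract.of ξ).dens (i+1) := lt_of_lt_of_le hq0 hdenssucc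
  -- bound for |q ξ - p|
  have hu : |(q:ℝ) * ξ - (p:ℝ)| * q ≤ 1 := by
    have habs := GenContFract.abs_sub_convs_le (hnt i)
    rw [GenContFract.conv_eq_num_div_den, hpnum, hqden] at habs
    have hfactor : (q:ℝ) * ξ - (p:ℝ) = (ξ - (p:ℝ)/(q:ℝ)) * q := by
      field_simp
    rw [hfactor, abs_mul, abs_of_pos hq0]
    calc |ξ - (p:ℝ)/(q:ℝ)| * (q:ℝ) * (q:ℝ)
        ≤ (1 / ((q:ℝ) * (GenContFract.of ξ).dens (i+1))) * (q:ℝ) * (q:ℝ) := by gcongr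
      _ = (q:ℝ) / (GenContFract.of ξ).dens (i+1) := by field_simp
      _ ≤ 1 := by rw [div_le_one hd1pos]; exact hdenssucc
  -- now the previous index
  rcases i with _ | j
  · -- i = 0 : dens 0 = 1, take p' = 1, q' = 0
    have hq1' : (q:ℝ) = 1 := by
      rw [← hqden, GenContFract.zeroth_den_eq_one]
    refine ⟨p, 1, 0, le_refl 0, by rw [hq1']; norm_num, hu, ?_, ?_⟩
    · rw [hq1']; norm_num
    · have : (q:ℤ) = 1 := by exact_mod_cast hq1'
      simp [this]
  · -- i = j+1
    obtain ⟨p', hp'⟩ := (contsAux_int ξ hnt (j+1)).1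
    obtain ⟨q', hq'⟩ := (contsAux_int ξ hnt (j+1)).2
    have hp'num : (GenContFract.of ξ).nums j = (p':ℝ) := by
      rwa [GenContFract.num_eq_conts_a, GenContFract.nth_cont_eq_succ_nth_contAux]
    have hq'den : (GenContFract.of ξ).dens j = (q':ℝ) := by
      rwa [GenContFract.den_eq_conts_b, GenContFract.nth_cont_eq_succ_nth_contAux]
    have hq'pos : (0:ℝ) < (q':ℝ) := by
      rw [← hq'den]
      have hfib : (Nat.fib (j+1) : ℝ) ≤ (GenContFract.of ξ).dens j := by
        apply GenContFract.succ_nth_fib_le_of_nth_den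
        rcases j with _ | j'
        · exact Or.inl rfl
        · exact Or.inr (hnt _)
      have : (0:ℝ) < (Nat.fib (j+1) : ℝ) := by
        exact_mod_cast Nat.fib_pos.mpr (Nat.succ_pos j)
      linarith
    have hq'le : (q':ℝ) ≤ (q:ℝ) := by
      rw [← hq'den, ← hqden]; exact GenContFract.of_den_mono
    have hu' : |(q':ℝ) * ξ - (p':ℝ)| * q ≤ 1 := by
      have habs := GenContFract.abs_sub_convs_le (hnt j)
      rw [GenContFract.conv_eq_num_div_den, hp'num, hq'den, hqden] at habs
      have hfactor : (q':ℝ) * ξ - (p':ℝ) = (ξ - (p':ℝ)/(q':ℝ)) * q' := by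
        field_simp
      rw [hfactor, abs_mul, abs_of_pos hq'pos]
      calc |ξ - (p':ℝ)/(q':ℝ)| * (q':ℝ) * (q:ℝ)
          ≤ (1 / ((q':ℝ) * (q:ℝ))) * (q':ℝ) * (q:ℝ) := by gcongr
        _ = 1 := by field_simp
    -- determinant
    have hdet := SimpContFract.determinant (s := SimpContFract.of ξ) (hnt j)
    have hcoe : ((SimpContFract.of ξ : SimpContFract ℝ) : GenContFract ℝ) = GenContFract.of ξ := rfl
    rw [hcoe, hp'num, hq'den, hqden, hpnum] at hdet
    refine ⟨p, p', q', by exact_mod_cast le_of_lt hq'pos, hq'le, hu, hu', ?_⟩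
    intro hzero
    have : ((q:ℤ) * p' - q' * p : ℝ) = 0 := by exact_mod_cast congrArg (fun z : ℤ => (z:ℝ)) hzero
    push_cast at this
    have h1 : (p':ℝ) * q - q' * p = (-1)^(j+1) := hdet
    rw [show (q:ℝ) * p' - q' * p = (p':ℝ) * q - q' * p from by ring] at this
    rw [this] at h1
    have := h1.symm
    rcases Nat.even_or_odd (j+1) with he | ho
    · rw [he.neg_one_pow] at this; norm_num at this
    · rw [ho.neg_one_pow] at this; norm_num at this


end ExistsIrredAux

open Polynomial Finset ExistsIrredAux

/-- Existence of irreducible polynomials with controlled divided derivatives: if `q ≥ 1` is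
the denominator of a convergent of the irrational number `ξ` and `c₅ = (n+1)·2^(n+1)`, then
there is a polynomial `P ∈ ℤ[T]` of degree `n`, irreducible over `ℚ`, with
`c₅ q^(2k-n) ≤ |P^{[k]}(ξ)| ≤ 3 c₅ q^(2k-n)` for all `0 ≤ k ≤ n`. -/
theorem exists_irreducible_poly_controlled
    (ξ : ℝ) (hξ : Irrational ξ) (n : ℕ) (hn : 0 < n) (q : ℕ)
    (hq : IsConvergentDenom ξ q) :
    ∃ P : Polynomial ℤ, P.natDegree = n ∧ Irreducible (P.map (Int.castRingHom ℚ)) ∧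
      ∀ k ≤ n,
        ((n : ℝ) + 1) * 2 ^ (n + 1) * (q : ℝ) ^ (2 * (k : ℝ) - n) ≤ |divDerivZ ξ P k| ∧
        |divDerivZ ξ P k| ≤ 3 * (((n : ℝ) + 1) * 2 ^ (n + 1)) * (q : ℝ) ^ (2 * (k : ℝ) - n) := by
  classical
  obtain ⟨hq1, i, hi⟩ := hq
  obtain ⟨p, p', q', hq'0, hq'le, hu, hu', hD⟩ := exists_good_pair ξ hξ q hq1 i hi
  have hqr1 : (1:ℝ) ≤ (q:ℝ) := by exact_mod_cast hq1
  have hqr0 : (0:ℝ) < (q:ℝ) := lt_of_lt_of_le zero_lt_one hqr1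
  have hq'r0 : (0:ℝ) ≤ (q':ℝ) := by exact_mod_cast hq'0
  -- polynomial families
  set gz : Fin (n+1) → Polynomial ℤ :=
    fun j => (C (q:ℤ) * X - C p) ^ (j:ℕ) * (C q' * X - C p') ^ (n - (j:ℕ)) with hgz
  set fr : Fin (n+1) → Polynomial ℝ :=
    fun j => (C (q:ℝ) * X - C (p:ℝ)) ^ (j:ℕ) * (C (q':ℝ) * X - C (p':ℝ)) ^ (n - (j:ℕ)) with hfr
  have hmapg : ∀ j, (gz j).map (Int.castRingHom ℝ) = fr j := by
    intro j
    simp only [hgz, hfr]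
    rw [Polynomial.map_mul, Polynomial.map_pow, Polynomial.map_pow, Polynomial.map_sub,
      Polynomial.map_sub, Polynomial.map_mul, Polynomial.map_mul, Polynomial.map_C,
      Polynomial.map_C, Polynomial.map_C, Polynomial.map_C, Polynomial.map_X]
    norm_num
  have hlin : ∀ a b : ℝ, ((C a * X - C b).comp (X + C ξ)) = C a * X + C (a * ξ - b) := by
    intro a b
    simp only [sub_comp, mul_comp, C_comp, X_comp]
    rw [C_sub, C_mul]
    ring
  have htay : ∀ j : Fin (n+1), taylor ξ (fr j)
      = (C (q:ℝ) * X + C ((q:ℝ) * ξ - (p:ℝ))) ^ (j:ℕ)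
        * (C (q':ℝ) * X + C ((q':ℝ) * ξ - (p':ℝ))) ^ (n - (j:ℕ)) := by
    intro j
    simp only [hfr]
    rw [taylor_apply, mul_comp, pow_comp, pow_comp, hlin, hlin]
  -- scaled power Q
  set Qr : ℕ → ℝ := fun k => (q:ℝ) ^ (2*k) / (q:ℝ) ^ n with hQr
  have hQpos : ∀ k, 0 < Qr k := by
    intro k; simp only [hQr]; positivity
  have hGb' : ∀ (j : Fin (n+1)) (k : ℕ),
      |(taylor ξ (fr j)).coeff k| ≤ (n.choose k : ℝ) * Qr k := by
    intro j k
    have hjn : (j:ℕ) ≤ n := Nat.lt_succ_iff.mp j.isLt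
    have := key_bound hqr1 hq'r0 hq'le hu hu' n (j:ℕ) k hjn
    rw [← htay j] at this
    simp only [hQr]
    rw [← mul_div_assoc, le_div_iff₀ (pow_pos hqr0 n)]
    linarith [this]
  -- constant c5
  set c5 : ℝ := ((n:ℝ) + 1) * 2 ^ (n + 1) with hc5
  have hc5pos : 0 < c5 := by rw [hc5]; positivity
  -- target coefficients
  set w : ℕ → ℝ := fun k =>
    (2 * c5 * Qr k - (taylor ξ ((X:Polynomial ℝ)^n + C 2)).coeff k) / 4 with hw
  set S : Polynomial ℝ := ∑ m ∈ range (n+1), w m • ((X:Polynomial ℝ) - C ξ) ^ m with hS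
  have hDr : (q:ℝ) * (p':ℝ) - (q':ℝ) * (p:ℝ) ≠ 0 := by
    intro h0
    apply hD
    have : (((q:ℤ) * p' - q' * p : ℤ) : ℝ) = 0 := by push_cast; linarith
    exact_mod_cast this
  have hSmem : S ∈ Submodule.span ℝ (Set.range fr) := by
    rw [hS, hfr]
    refine Submodule.sum_mem _ fun m hm => Submodule.smul_mem _ _ ?_
    exact xsub_pow_mem ξ hDr n m (Nat.lt_succ_iff.mp (Finset.mem_range.mp hm))
  obtain ⟨c, hc⟩ := (Submodule.mem_span_range_iff_exists_fun ℝ).mp hSmem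
  -- rounded coefficients
  set mz : Fin (n+1) → ℤ := fun j => round (c j) with hmz
  have hround : ∀ j, |(mz j : ℝ) - c j| ≤ 1/2 := by
    intro j
    simp only [hmz]
    rw [abs_sub_comm]
    exact abs_sub_round (c j)
  set Rz : Polynomial ℤ := ∑ j, C (mz j) * gz j with hRz
  set P : Polynomial ℤ := X^n + C 2 + C 4 * Rz with hP
  -- degree facts
  have hgdeg : ∀ j : Fin (n+1), (gz j).natDegree ≤ n := by
    intro j
    rw [hgz]
    refine natDegree_mul_le.trans ?_
    have h1 : ((C (q:ℤ) * X - C p) ^ (j:ℕ)).natDegree ≤ (j:ℕ) * 1 :=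
      natDegree_pow_le.trans (by
        gcongr
        rw [sub_eq_add_neg, ← C_neg]
        exact natDegree_linear_le)
    have h2 : ((C q' * X - C p') ^ (n - (j:ℕ))).natDegree ≤ (n - (j:ℕ)) * 1 :=
      natDegree_pow_le.trans (by
        gcongr
        rw [sub_eq_add_neg, ← C_neg]
        exact natDegree_linear_le)
    have hjn : (j:ℕ) ≤ n := Nat.lt_succ_iff.mp j.isLt
    omega
  have hRdeg : Rz.natDegree ≤ n := by
    rw [hRz]
    refine natDegree_sum_le_of_forall_le _ _ fun j _ => ?_
    exact natDegree_mul_le.trans (by simpa using hgdeg j)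
  have hPdegle : P.natDegree ≤ n := by
    rw [hP]
    refine natDegree_add_le_of_degree_le (natDegree_add_le_of_degree_le ?_ ?_) ?_
    · exact (natDegree_X_pow n).le
    · exact (natDegree_C 2).le.trans (Nat.zero_le n)
    · exact (natDegree_C_mul_le 4 Rz).trans hRdeg
  have hcoeffP : ∀ k, P.coeff k
      = (if k = n then 1 else 0) + (if k = 0 then 2 else 0) + 4 * Rz.coeff k := by
    intro k
    rw [hP]
    rw [coeff_add, coeff_add, coeff_X_pow, coeff_C, coeff_C_mul]
  have hPn : P.coeff n = 1 + 4 * Rz.coeff n := by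
    rw [hcoeffP]
    simp [hn.ne']
  have hPnne : P.coeff n ≠ 0 := by
    rw [hPn]; intro h; omega
  have hdeg : P.natDegree = n := natDegree_eq_of_le_of_coeff_ne_zero hPdegle hPnne
  refine ⟨P, hdeg, ?_, ?_⟩
  · -- irreducibility
    have hP0 : P ≠ 0 := fun h => hPnne (by rw [h, coeff_zero])
    have hdP : P = C P.content * P.primPart := P.eq_C_content_mul_primPart
    have hco : ∀ k, P.coeff k = P.content * P.primPart.coeff k := by
      intro k
      conv_lhs => rw [hdP]
      rw [coeff_C_mul]
    have h2n : ¬ ((2:ℤ) ∣ P.coeff n) := by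
      rw [hPn]; intro h; omega
    have hdodd : ¬ ((2:ℤ) ∣ P.content) := by
      intro h2d
      exact h2n (by rw [hco n]; exact h2d.mul_right _)
    have hEis : P.primPart.IsEisensteinAt (Ideal.span {(2:ℤ)}) := by
      refine ⟨?_, ?_, ?_⟩
      · rw [Polynomial.leadingCoeff, natDegree_primPart, hdeg, Ideal.mem_span_singleton]
        intro h2
        exact h2n (by rw [hco n]; exact Dvd.dvd.mul_left h2 _)
      · intro k hk
        rw [natDegree_primPart, hdeg] at hk
        rw [Ideal.mem_span_singleton]
        have h2P : (2:ℤ) ∣ P.coeff k := by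
          rw [hcoeffP, if_neg hk.ne]
          split_ifs <;> omega
        rw [hco k] at h2P
        exact (Int.prime_two.dvd_mul.mp h2P).resolve_left hdodd
      · rw [Ideal.span_singleton_pow, Ideal.mem_span_singleton]
        intro h4
        have h4P : (2:ℤ)^2 ∣ P.coeff 0 := by
          rw [hco 0]
          exact Dvd.dvd.mul_left h4 _
        have hP0' : P.coeff 0 = 2 + 4 * Rz.coeff 0 := by
          rw [hcoeffP]
          simp [hn.ne, hn.ne']
        rw [hP0'] at h4P
        norm_num at h4P
    have hprime : (Ideal.span {(2:ℤ)}).IsPrime :=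
      (Ideal.span_singleton_prime (by norm_num)).mpr Int.prime_two
    have hirrZ : Irreducible P.primPart :=
      hEis.irreducible hprime (isPrimitive_primPart P)
        (by rw [natDegree_primPart, hdeg]; exact hn)
    have hirrQ : Irreducible (P.primPart.map (Int.castRingHom ℚ)) :=
      (Polynomial.IsPrimitive.Int.irreducible_iff_irreducible_map_cast
        (isPrimitive_primPart P)).mp hirrZ
    have hd0 : P.content ≠ 0 := fun h => hP0 (content_eq_zero_iff.mp h)
    have hmapP : P.map (Int.castRingHom ℚ)
        = C ((P.content : ℚ)) * P.primPart.map (Int.castRingHom ℚ) := by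
      conv_lhs => rw [hdP]
      rw [Polynomial.map_mul, Polynomial.map_C]
      norm_num
    have hunit : IsUnit (C ((P.content : ℚ))) :=
      isUnit_C.mpr (isUnit_iff_ne_zero.mpr (Int.cast_ne_zero.mpr hd0))
    have hassoc : Associated (P.primPart.map (Int.castRingHom ℚ)) (P.map (Int.castRingHom ℚ)) := by
      rw [hmapP]
      exact ⟨hunit.unit, by rw [IsUnit.unit_spec]; ring⟩
    exact hassoc.irreducible hirrQ
  · -- bounds
    intro k hk
    have hrpow : (q:ℝ) ^ (2 * (k:ℝ) - (n:ℝ)) = Qr k := by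
      rw [Real.rpow_sub hqr0]
      simp only [hQr]
      congr 1
      · rw [show (2*(k:ℝ)) = ((2*k : ℕ) : ℝ) by push_cast; ring, Real.rpow_natCast]
      · rw [Real.rpow_natCast]
    -- divided derivative computation
    have hmapRz : (Rz.map (Int.castRingHom ℝ)) = ∑ j, ((mz j : ℤ) : ℝ) • fr j := by
      rw [hRz, Polynomial.map_sum]
      refine Finset.sum_congr rfl fun j _ => ?_
      rw [Polynomial.map_mul, Polynomial.map_C, hmapg j, smul_eq_C_mul]
      norm_num
    have htayRz : (taylor ξ (Rz.map (Int.castRingHom ℝ))).coeff k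
        = ∑ j, (mz j : ℝ) * (taylor ξ (fr j)).coeff k := by
      rw [hmapRz, map_sum, finset_sum_coeff]
      exact Finset.sum_congr rfl fun j _ => by rw [map_smul, coeff_smul, smul_eq_mul]
    have hdd0 : divDerivZ ξ P k
        = (taylor ξ ((X:Polynomial ℝ)^n + C 2)).coeff k
          + 4 * ∑ j, (mz j : ℝ) * (taylor ξ (fr j)).coeff k := by
      unfold divDerivZ divDeriv
      rw [hP]
      rw [Polynomial.map_add, Polynomial.map_mul, Polynomial.map_C]
      rw [map_add, coeff_add]
      congr 1
      · rw [Polynomial.map_add, Polynomial.map_pow, Polynomial.map_X, Polynomial.map_C]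
        norm_num
      · rw [show (C ((Int.castRingHom ℝ) (4:ℤ)) : Polynomial ℝ) = C (4:ℝ) by norm_num]
        rw [← smul_eq_C_mul, map_smul, coeff_smul, smul_eq_mul, htayRz]
    have hXm : ∀ m : ℕ, taylor ξ (((X:Polynomial ℝ) - C ξ)^m) = X^m := by
      intro m
      rw [taylor_apply, pow_comp, sub_comp, X_comp, C_comp]
      simp
    have hTS : (taylor ξ S).coeff k = w k := by
      rw [hS, map_sum, finset_sum_coeff]
      rw [Finset.sum_congr rfl fun m _ => by
        rw [map_smul, hXm, coeff_smul, coeff_X_pow, smul_eq_mul]]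
      simp only [mul_ite, mul_one, mul_zero]
      rw [Finset.sum_ite_eq (range (n+1)) k w]
      simp [Nat.lt_succ_iff, hk]
    have hck : ∑ j, c j * (taylor ξ (fr j)).coeff k = w k := by
      have e1 : (taylor ξ (∑ j, c j • fr j)).coeff k
          = ∑ j, c j * (taylor ξ (fr j)).coeff k := by
        rw [map_sum, finset_sum_coeff]
        exact Finset.sum_congr rfl fun j _ => by rw [map_smul, coeff_smul, smul_eq_mul]
      rw [← e1, hc, hTS]
    have hsplit : divDerivZ ξ P k
        = 2 * c5 * Qr k + 4 * ∑ j, ((mz j : ℝ) - c j) * (taylor ξ (fr j)).coeff k := by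
      rw [hdd0]
      have e2 : ∑ j, (mz j : ℝ) * (taylor ξ (fr j)).coeff k
          = ∑ j, c j * (taylor ξ (fr j)).coeff k
            + ∑ j, ((mz j : ℝ) - c j) * (taylor ξ (fr j)).coeff k := by
        rw [← Finset.sum_add_distrib]
        exact Finset.sum_congr rfl fun j _ => by ring
      rw [e2, hck]
      simp only [hw]
      ring
    have hsumE : |∑ j, ((mz j : ℝ) - c j) * (taylor ξ (fr j)).coeff k|
        ≤ ((n:ℝ)+1) * ((1/2) * ((n.choose k : ℝ) * Qr k)) := by
      refine (Finset.abs_sum_le_sum_abs _ _).trans ?_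
      have hterm : ∀ j : Fin (n+1), |((mz j : ℝ) - c j) * (taylor ξ (fr j)).coeff k|
          ≤ (1/2) * ((n.choose k : ℝ) * Qr k) := by
        intro j
        rw [abs_mul]
        exact mul_le_mul (hround j) (hGb' j k) (abs_nonneg _) (by norm_num)
      refine (Finset.sum_le_sum fun j _ => hterm j).trans ?_
      rw [Finset.sum_const, Finset.card_univ, Fintype.card_fin, nsmul_eq_mul]
      push_cast
      ring_nf
      rfl
    have hEb : |4 * ∑ j, ((mz j : ℝ) - c j) * (taylor ξ (fr j)).coeff k| ≤ c5 * Qr k := by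
      rw [abs_mul, abs_of_nonneg (by norm_num : (0:ℝ) ≤ 4)]
      calc (4:ℝ) * |∑ j, ((mz j : ℝ) - c j) * (taylor ξ (fr j)).coeff k|
          ≤ 4 * (((n:ℝ)+1) * ((1/2) * ((n.choose k : ℝ) * Qr k))) := by
            exact mul_le_mul_of_nonneg_left hsumE (by norm_num)
        _ = ((n:ℝ)+1) * (2 * (n.choose k : ℝ)) * Qr k := by ring
        _ ≤ ((n:ℝ)+1) * (2 * (2:ℝ)^n) * Qr k := by
            have hch : (n.choose k : ℝ) ≤ (2:ℝ)^n := by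
              exact_mod_cast choose_le_two_pow n k
            have := (hQpos k).le
            gcongr
        _ = c5 * Qr k := by rw [hc5]; ring
    rw [hrpow]
    rw [hsplit]
    set E : ℝ := 4 * ∑ j, ((mz j : ℝ) - c j) * (taylor ξ (fr j)).coeff k with hE

    constructor
    · have habs : |2 * c5 * Qr k| - |(-E)| ≤ |2 * c5 * Qr k - (-E)| :=
        abs_sub_abs_le_abs_sub _ _
      rw [abs_neg, sub_neg_eq_add] at habs
      have h2 : |2 * c5 * Qr k| = 2 * c5 * Qr k := abs_of_pos (by positivity)
      rw [h2] at habs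
      have := hQpos k
      linarith [hEb]
    · refine (abs_add_le _ _).trans ?_
      have h2 : |2 * c5 * Qr k| = 2 * c5 * Qr k := abs_of_pos (by positivity)
      rw [h2]
      have := hQpos k
      linarith [hEb]
end
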